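/- arXiv:1711.01462 — 4 statements merged into one kernel-verified Lean document; each statement's English description precedes it below -/
import Mathlib

section
/- Let X be connected, locally path connected, and a strong H-SLT space at x₀. Then the core of H in π₁(X,x₀) is open in π₁^{qtop}(X,x₀) if and only if H is open in π₁^{qtop}(X,x₀). -/
open CategoryTheory unitInterval
open scoped Topology

attribute [local instance] Path.Homotopic.setoid

noncomputable section

/-- The homotopy class of a loop as an element of the fundamental group. -/
def loopClass {X : Type*} [TopologicalSpace X] {x : X} (γ : Path x x) :
    FundamentalGroup X x :=
  FundamentalGroup.fromPath
    (⟦γ⟧ : Path.Homotopic.Quotient x x)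

variable {X : Type*} [TopologicalSpace X]

/-- The Spanier group of a family of subsets of `X`, based at `x`: the subgroup generated by
classes `[α∗β∗α⁻¹]` where `α` is a path from `x` and `β` is a loop inside a member of `𝒰`. -/
def spanierGroupAt (x : X) (𝒰 : Set (Set X)) : Subgroup (FundamentalGroup X x) :=
  Subgroup.closure {g | ∃ (y : X) (α : Path x y) (β : Path y y) (U : Set X),
    U ∈ 𝒰 ∧ (∀ t, β t ∈ U) ∧ g = loopClass (α.trans (β.trans α.symm))}

/-- `𝒰` is an open cover of `X`. -/
def IsOpenCover (𝒰 : Set (Set X)) : Prop := (∀ U ∈ 𝒰, IsOpen U) ∧ ⋃₀ 𝒰 = Set.univ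

/-- `X` is a strong `H`-SLT space at `x₀`: for every `x ∈ X` and every open neighborhood `U`
of `x₀` there is an open neighborhood `V` of `x` such that for every loop `β` in `V` based at
`x` and every path `α` from `x₀` to `x` there is a loop `λ` in `U` based at `x₀` with
`[α∗β∗α⁻¹∗λ⁻¹] ∈ H`. -/
def StrongHSLTAt (x₀ : X) (H : Subgroup (FundamentalGroup X x₀)) : Prop :=
  ∀ (x : X) (U : Set X), IsOpen U → x₀ ∈ U →
    ∃ V : Set X, IsOpen V ∧ x ∈ V ∧
      ∀ (β : Path x x), (∀ t, β t ∈ V) → ∀ (α : Path x₀ x),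
        ∃ lam : Path x₀ x₀, (∀ t, lam t ∈ U) ∧
          loopClass (α.trans (β.trans α.symm)) * (loopClass lam)⁻¹ ∈ H

/-- The quotient topology on the fundamental group induced by the compact-open topology on
the loop space, i.e. the topology of the quasitopological fundamental group `π₁^qtop`. -/
def qtop (x₀ : X) : TopologicalSpace (FundamentalGroup X x₀) :=
  TopologicalSpace.coinduced (fun γ : Path x₀ x₀ => loopClass γ) inferInstance

namespace MyAux

variable {x₀ : X}

/-- abbreviation for the iso/hom equivalence at the basepoint -/
abbrev eIso (x₀ : X) :
    (FundamentalGroupoid.mk x₀ ≅ FundamentalGroupoid.mk x₀) ≃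
      (FundamentalGroupoid.mk x₀ ⟶ FundamentalGroupoid.mk x₀) :=
  CategoryTheory.Groupoid.isoEquivHom _ _

/-- view an element of the fundamental group as a hom -/
def eh (a : FundamentalGroup X x₀) : (FundamentalGroupoid.mk x₀ ⟶ FundamentalGroupoid.mk x₀) :=
  (show FundamentalGroupoid.mk x₀ ⟶ FundamentalGroupoid.mk x₀ from a)

lemma eh_injective : Function.Injective (eh (X := X) (x₀ := x₀)) := by
  intro a b h
  exact h

lemma eh_loopClass (γ : Path x₀ x₀) : eh (loopClass γ) = ⟦γ⟧ := rfl

lemma eh_mul (a b : FundamentalGroup X x₀) : eh (a * b) = eh b ≫ eh a := rfl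

lemma eh_one : eh (1 : FundamentalGroup X x₀) = 𝟙 _ := rfl

lemma eh_inv (a : FundamentalGroup X x₀) : eh a⁻¹ = inv (eh a) := by
  symm
  apply IsIso.inv_eq_of_hom_inv_id
  show eh a ≫ eh a⁻¹ = 𝟙 _
  rw [← eh_mul, inv_mul_cancel, eh_one]


section Groupoid
variable {a b c : X}

/-- the homotopy class of a path as a morphism in the fundamental groupoid -/
def hq {a b : X} (p : Path a b) : FundamentalGroupoid.mk a ⟶ FundamentalGroupoid.mk b := ⟦p⟧

lemma comp_lift' (p : Path a b) (q : Path b c) : hq (p.trans q) = hq p ≫ hq q :=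
  rfl

lemma id_lift : (𝟙 (FundamentalGroupoid.mk a)) = hq (Path.refl a) := rfl

lemma symm_lift (p : Path a b) : hq p.symm = inv (hq p) := by
  apply IsIso.eq_inv_of_hom_inv_id
  rw [← comp_lift']
  show _ = hq (Path.refl a)
  exact Quotient.sound ⟨(Path.Homotopy.reflTransSymm p).symm⟩

lemma lift_congr {a b a' b' : X} (p : Path a b) (q : Path a' b') (ha : a' = a) (hb : b' = b)
    (h : ∀ u, p u = q u) :
    hq p = eqToHom (show FundamentalGroupoid.mk a = FundamentalGroupoid.mk a' by rw [ha]) ≫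
      hq q ≫ eqToHom (show FundamentalGroupoid.mk b' = FundamentalGroupoid.mk b by rw [hb]) := by
  subst ha; subst hb
  have : p = q := by ext u; exact h u
  simp [this]

lemma eh_loopClass' (γ : Path x₀ x₀) : eh (loopClass γ) = hq γ := rfl

lemma hq_const {a b : X} (P : Path a b) (x₀ : X) (h : ∀ u, P u = x₀) :
    hq P = eqToHom (congrArg FundamentalGroupoid.mk
      ((P.source.symm.trans (h 0)).trans ((h 1).symm.trans P.target))) := by
  have ha : x₀ = a := by rw [← P.source, h 0]
  have hb : x₀ = b := by rw [← P.target, h 1]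
  have := lift_congr P (Path.refl x₀) ha hb (fun u => by rw [h u]; rfl)
  rw [this, ← id_lift]
  simp

end Groupoid


section Seg
variable {a b c : X}

/-- the path traced by a continuous map on a real segment -/
def seg (f : C(ℝ, X)) (s t : ℝ) : Path (f s) (f t) where
  toFun u := f (s + (t - s) * u)
  continuous_toFun := by fun_prop
  source' := by simp
  target' := by simp

lemma seg_apply (f : C(ℝ, X)) (s t : ℝ) (u : I) : seg f s t u = f (s + (t - s) * u) := rfl

lemma seg_mem {W : Set X} {f : C(ℝ, X)} {s t : ℝ} (h : s ≤ t)
    (hW : ∀ r ∈ Set.Icc s t, f r ∈ W) (u : I) : seg f s t u ∈ W := by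
  have h1 := u.2.1
  have h2 := u.2.2
  exact hW _ ⟨by nlinarith, by nlinarith⟩

lemma seg_comp (f : C(ℝ, X)) {s t u : ℝ} (h₁ : s ≤ t) (h₂ : t ≤ u) :
    hq (seg f s u) = hq (seg f s t) ≫ hq (seg f t u) := by
  rw [← comp_lift']
  set r : ℝ := (t - s) / (u - s) with hr
  have hsu : s ≤ u := h₁.trans h₂
  have hr0 : 0 ≤ r := by
    rcases eq_or_lt_of_le hsu with h | h
    · simp [hr, ← h]
    · have h' : (0:ℝ) < u - s := by linarith
      rw [hr]
      exact div_nonneg (by linarith) (by linarith)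
  have hr1 : r ≤ 1 := by
    rcases eq_or_lt_of_le hsu with h | h
    · simp [hr, ← h]
    · have h' : (0:ℝ) < u - s := by linarith
      rw [hr, div_le_one h']
      linarith
  have hru : (u - s) * r = t - s := by
    rcases eq_or_lt_of_le hsu with h | h
    · have : t = s := le_antisymm (h ▸ h₂) h₁
      simp [this, ← h]
    · have h' : u - s ≠ 0 := by intro h0; rw [sub_eq_zero] at h0; rw [h0] at h; exact lt_irrefl _ h
      rw [hr]
      field_simp
  have hut : (u - s) * (1 - r) = u - t := by
    rw [mul_sub, mul_one, hru]; ring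
  have hgmem : ∀ w : I, (if (w:ℝ) ≤ 1/2 then 2*r*w else r + (1-r)*(2*w-1)) ∈ I := by
    intro w
    have h1 := w.2.1
    have h2 := w.2.2
    split_ifs with hw
    · constructor
      · nlinarith
      · nlinarith
    · push_neg at hw
      constructor
      · nlinarith
      · nlinarith
  set g : I → I := fun w => ⟨if (w:ℝ) ≤ 1/2 then 2*r*w else r + (1-r)*(2*w-1), hgmem w⟩ with hg
  have hgc : Continuous g := by
    apply Continuous.subtype_mk
    apply Continuous.if_le
    · fun_prop
    · fun_prop
    · exact continuous_subtype_val
    · exact continuous_const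
    · intro x hx
      rw [hx]; ring
  have hg0 : g 0 = 0 := by
    apply Subtype.ext
    show (if ((0:I):ℝ) ≤ 1/2 then _ else _) = (0:ℝ)
    norm_num
  have hg1 : g 1 = 1 := by
    apply Subtype.ext
    show (if ((1:I):ℝ) ≤ 1/2 then 2*r*((1:I):ℝ) else r + (1-r)*(2*((1:I):ℝ)-1)) = (1:ℝ)
    norm_num
  have key : (seg f s t).trans (seg f t u) = (seg f s u).reparam g hgc hg0 hg1 := by
    ext w
    rw [Path.trans_apply]
    have hrep : (seg f s u).reparam g hgc hg0 hg1 w = f (s + (u - s) * (g w)) := rfl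
    rw [hrep]
    split_ifs with hw
    · show f (s + (t - s) * (2 * (w:ℝ))) = _
      have hgw : ((g w : I) : ℝ) = 2*r*w := by
        show (if (w:ℝ) ≤ 1/2 then 2*r*(w:ℝ) else _) = _
        rw [if_pos hw]
      rw [hgw]
      congr 1
      linear_combination (-2 * (w:ℝ)) * hru
    · show f (t + (u - t) * (2 * (w:ℝ) - 1)) = _
      have hgw : ((g w : I) : ℝ) = r + (1-r)*(2*(w:ℝ)-1) := by
        show (if (w:ℝ) ≤ 1/2 then _ else r + (1-r)*(2*(w:ℝ)-1)) = _
        rw [if_neg hw]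
      rw [hgw]
      congr 1
      linear_combination (-1 : ℝ) * hru + (-(2*(w:ℝ)-1)) * hut
  rw [key]
  exact Quotient.sound ⟨Path.Homotopy.reparam _ g hgc hg0 hg1⟩

end Seg


section Mem
variable {a b c : X}

lemma trans_mem {W : Set X} {p : Path a b} {q : Path b c} (hp : ∀ s, p s ∈ W)
    (hq : ∀ s, q s ∈ W) : ∀ s, p.trans q s ∈ W := by
  intro s
  rw [Path.trans_apply]
  split_ifs <;> [exact hp _; exact hq _]

lemma symm_mem {W : Set X} {p : Path a b} (hp : ∀ s, p s ∈ W) : ∀ s, p.symm s ∈ W := by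
  intro s; exact hp _

end Mem


section KeyClaim

lemma key_claim {x₀ : X} (K : Subgroup (FundamentalGroup X x₀)) (γ δ : Path x₀ x₀)
    (t : ℕ → I) (m : ℕ) (hm : 0 < m) (ht0 : t 0 = 0) (htm : ∀ j, m ≤ j → t j = 1)
    (htmono : Monotone t)
    (W O : ℕ → Set X)
    (hWγ : ∀ k, ∀ s : I, s ∈ Set.Icc (t k) (t (k+1)) → γ s ∈ W k)
    (hWδ : ∀ k, k < m → ∀ s : I, s ∈ Set.Icc (t k) (t (k+1)) → δ s ∈ W k)
    (hOγ : ∀ j, 0 < j → j < m → γ (t j) ∈ O j)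
    (hOδ : ∀ j, 0 < j → j < m → δ (t j) ∈ O j)
    (hOpc : ∀ j, 0 < j → j < m → IsPathConnected (O j))
    (hOW : ∀ j, 0 < j → j < m → O j ⊆ W (j-1) ∩ W j)
    (hgen : ∀ (y : X) (α : Path x₀ y) (β : Path y y), (∃ k, k < m ∧ ∀ s, β s ∈ W k) →
      loopClass (α.trans (β.trans α.symm)) ∈ K)
    (hγK : loopClass γ ∈ K) : loopClass δ ∈ K := by
  classical
  set F : C(ℝ, X) := ⟨γ.extend, γ.continuous_extend⟩ with hF
  set G : C(ℝ, X) := ⟨δ.extend, δ.continuous_extend⟩ with hG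
  have hF0 : x₀ = F 0 := γ.extend_zero.symm
  have hG0 : x₀ = G 0 := δ.extend_zero.symm
  have hFt : ∀ j, F ↑(t j) = γ (t j) := fun j => γ.extend_extends' (t j)
  have hGt : ∀ j, G ↑(t j) = δ (t j) := fun j => δ.extend_extends' (t j)
  -- connecting paths at the junctions
  have hp : ∀ k, ∃ q : Path (F ↑(t k)) (G ↑(t k)),
      (∀ s, k < m → q s ∈ W k) ∧ (∀ s, 0 < k → k ≤ m → q s ∈ W (k-1)) ∧
        ((k = 0 ∨ m ≤ k) → ∀ s, q s = x₀) := by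
    intro k
    rcases Nat.lt_or_ge k m with hkm | hkm
    · rcases Nat.eq_zero_or_pos k with rfl | hk0
      · have he1 : F ↑(t 0) = x₀ := by rw [ht0]; exact γ.extend_zero
        have he2 : G ↑(t 0) = x₀ := by rw [ht0]; exact δ.extend_zero
        refine ⟨(Path.refl x₀).cast he1 he2, ?_, ?_, ?_⟩
        · intro s _
          have : ((Path.refl x₀).cast he1 he2) s = x₀ := by
            simp [Path.cast]
          rw [this]
          have : x₀ = γ (t 0) := by rw [ht0]; exact γ.source.symm
          rw [this]
          exact hWγ 0 (t 0) ⟨le_refl _, htmono (by omega)⟩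
        · intro s h0; omega
        · intro h s
          simp [Path.cast]
      · obtain ⟨q, hq⟩ := (hOpc k hk0 hkm).joinedIn _ ((hFt k) ▸ hOγ k hk0 hkm) _
          ((hGt k) ▸ hOδ k hk0 hkm)
        refine ⟨q, fun s _ => (hOW k hk0 hkm (hq s)).2, fun s _ _ => (hOW k hk0 hkm (hq s)).1,
          fun h => by omega⟩
    · have htk : t k = 1 := htm k hkm
      have he1 : F ↑(t k) = x₀ := by rw [htk]; exact γ.extend_one
      have he2 : G ↑(t k) = x₀ := by rw [htk]; exact δ.extend_one
      refine ⟨(Path.refl x₀).cast he1 he2, ?_, ?_, ?_⟩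
      · intro s hs; omega
      · intro s hk0 hkm'
        have hk : k = m := by omega
        have hval : ((Path.refl x₀).cast he1 he2) s = x₀ := by simp [Path.cast]
        rw [hval]
        have hx1 : x₀ = γ (t m) := by rw [htm m (le_refl m)]; exact γ.target.symm
        rw [hk, hx1]
        have hmm : (m - 1) + 1 = m := by omega
        refine hWγ (m-1) (t m) ⟨?_, ?_⟩
        · exact htmono (by omega)
        · rw [hmm]
      · intro _ s; simp [Path.cast]
  choose p hp1 hp2 hp3 using hp
  -- the accumulated paths
  let A : ∀ k : ℕ, Path x₀ (F ↑(t k)) := fun k => (seg F 0 ↑(t k)).cast hF0 rfl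
  let B : ∀ k : ℕ, Path x₀ (G ↑(t k)) := fun k => (seg G 0 ↑(t k)).cast hG0 rfl
  let Λ : ∀ k : ℕ, Path x₀ x₀ := fun k => (B k).trans ((p k).symm.trans (A k).symm)
  have hAq : ∀ k, hq (A k) =
      eqToHom (congrArg FundamentalGroupoid.mk hF0) ≫ hq (seg F 0 ↑(t k)) := by
    intro k
    have := lift_congr (A k) (seg F 0 ↑(t k)) hF0.symm rfl (fun u => rfl)
    simpa using this
  have hBq : ∀ k, hq (B k) =
      eqToHom (congrArg FundamentalGroupoid.mk hG0) ≫ hq (seg G 0 ↑(t k)) := by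
    intro k
    have := lift_congr (B k) (seg G 0 ↑(t k)) hG0.symm rfl (fun u => rfl)
    simpa using this
  have hseg0 : ∀ k, (0:ℝ) ≤ ↑(t k) := fun k => (t k).2.1
  have hsegk : ∀ k, (↑(t k):ℝ) ≤ ↑(t (k+1)) := fun k => htmono (Nat.le_succ k)
  have hArec : ∀ k, hq (A (k+1)) = hq (A k) ≫ hq (seg F ↑(t k) ↑(t (k+1))) := by
    intro k
    rw [hAq, hAq, seg_comp F (hseg0 k) (hsegk k), Category.assoc]
  have hBrec : ∀ k, hq (B (k+1)) = hq (B k) ≫ hq (seg G ↑(t k) ↑(t (k+1))) := by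
    intro k
    rw [hBq, hBq, seg_comp G (hseg0 k) (hsegk k), Category.assoc]
  have hCW : ∀ k, k < m → ∀ s, seg F ↑(t k) ↑(t (k+1)) s ∈ W k := by
    intro k hk
    apply seg_mem (hsegk k)
    intro r hr
    have hr0 : (0:ℝ) ≤ r := le_trans (hseg0 k) hr.1
    have hr1 : r ≤ 1 := le_trans hr.2 (t (k+1)).2.2
    have hFr : F r = γ ⟨r, hr0, hr1⟩ := γ.extend_apply ⟨hr0, hr1⟩
    rw [hFr]
    exact hWγ k _ ⟨hr.1, hr.2⟩
  have hDW : ∀ k, k < m → ∀ s, seg G ↑(t k) ↑(t (k+1)) s ∈ W k := by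
    intro k hk
    apply seg_mem (hsegk k)
    intro r hr
    have hr0 : (0:ℝ) ≤ r := le_trans (hseg0 k) hr.1
    have hr1 : r ≤ 1 := le_trans hr.2 (t (k+1)).2.2
    have hGr : G r = δ ⟨r, hr0, hr1⟩ := δ.extend_apply ⟨hr0, hr1⟩
    rw [hGr]
    exact hWδ k hk _ ⟨hr.1, hr.2⟩
  have hA0 : ∀ u, A 0 u = x₀ := by
    intro u
    show F (0 + ((↑(t 0):ℝ) - 0) * ↑u) = x₀
    rw [ht0]
    show γ.extend (0 + ((0:ℝ) - 0) * ↑u) = x₀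
    norm_num
  have hB0 : ∀ u, B 0 u = x₀ := by
    intro u
    show G (0 + ((↑(t 0):ℝ) - 0) * ↑u) = x₀
    rw [ht0]
    show δ.extend (0 + ((0:ℝ) - 0) * ↑u) = x₀
    norm_num
  have main : ∀ k, k ≤ m → loopClass (Λ k) ∈ K := by
    intro k
    induction k with
    | zero =>
      intro _
      have h1 : loopClass (Λ 0) = 1 := by
        apply eh_injective
        rw [eh_loopClass', eh_one]
        show hq ((B 0).trans ((p 0).symm.trans (A 0).symm)) = 𝟙 _
        rw [comp_lift', comp_lift', symm_lift, symm_lift,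
          hq_const (A 0) x₀ hA0, hq_const (B 0) x₀ hB0,
          hq_const (p 0) x₀ (hp3 0 (Or.inl rfl))]
        simp
      rw [h1]
      exact K.one_mem
    | succ k ih =>
      intro hk1
      have hkm : k < m := by omega
      set β : Path (F ↑(t k)) (F ↑(t k)) :=
        (p k).trans ((seg G ↑(t k) ↑(t (k+1))).trans
          ((p (k+1)).symm.trans (seg F ↑(t k) ↑(t (k+1))).symm)) with hβ
      have hpk1W : ∀ s, p (k+1) s ∈ W k := by
        intro s
        exact hp2 (k+1) s (by omega) hk1
      have hβW : ∀ s, β s ∈ W k :=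
        trans_mem (fun s => hp1 k s hkm)
          (trans_mem (hDW k hkm)
            (trans_mem (symm_mem hpk1W) (symm_mem (hCW k hkm))))
      have hgk : loopClass ((A k).trans (β.trans (A k).symm)) ∈ K :=
        hgen _ (A k) β ⟨k, hkm, hβW⟩
      have hrel : loopClass (Λ (k+1)) =
          loopClass ((A k).trans (β.trans (A k).symm)) * loopClass (Λ k) := by
        apply eh_injective
        rw [eh_mul, eh_loopClass', eh_loopClass', eh_loopClass']
        show hq ((B (k+1)).trans ((p (k+1)).symm.trans (A (k+1)).symm)) =
          hq ((B k).trans ((p k).symm.trans (A k).symm)) ≫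
            hq ((A k).trans (β.trans (A k).symm))
        rw [hβ]
        simp only [comp_lift', symm_lift, hArec, hBrec]
        simp
      rw [hrel]
      exact K.mul_mem hgk (ih (by omega))
  have hBm : ∀ u, B m u = δ u := by
    intro u
    show G (0 + ((↑(t m):ℝ) - 0) * ↑u) = δ u
    rw [htm m le_rfl]
    show δ.extend (0 + ((1:ℝ) - 0) * ↑u) = δ u
    have harg : (0 + ((1:ℝ) - 0) * ↑u) = ↑u := by ring
    rw [harg]
    exact δ.extend_extends' u
  have hAm : ∀ u, A m u = γ u := by
    intro u
    show F (0 + ((↑(t m):ℝ) - 0) * ↑u) = γ u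
    rw [htm m le_rfl]
    show γ.extend (0 + ((1:ℝ) - 0) * ↑u) = γ u
    have harg : (0 + ((1:ℝ) - 0) * ↑u) = ↑u := by ring
    rw [harg]
    exact γ.extend_extends' u
  have hGm : x₀ = G ↑(t m) := by
    rw [htm m le_rfl]; exact δ.extend_one.symm
  have hFm : x₀ = F ↑(t m) := by
    rw [htm m le_rfl]; exact γ.extend_one.symm
  have hBmq : hq (B m) = hq δ ≫ eqToHom (congrArg FundamentalGroupoid.mk hGm) := by
    have := lift_congr (B m) δ rfl hGm hBm
    simpa using this
  have hAmq : hq (A m) = hq γ ≫ eqToHom (congrArg FundamentalGroupoid.mk hFm) := by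
    have := lift_congr (A m) γ rfl hFm hAm
    simpa using this
  have hfin : loopClass δ = loopClass γ * loopClass (Λ m) := by
    apply eh_injective
    rw [eh_mul, eh_loopClass', eh_loopClass', eh_loopClass']
    show hq δ = hq ((B m).trans ((p m).symm.trans (A m).symm)) ≫ hq γ
    rw [comp_lift', comp_lift', symm_lift, symm_lift, hBmq, hAmq,
      hq_const (p m) x₀ (hp3 m (Or.inr le_rfl))]
    simp
  rw [hfin]
  exact K.mul_mem hγK (main m le_rfl)

end KeyClaim


section LemmaA

lemma isOpen_loopClass_preimage [LocallyPathConnectedSpace X] {x₀ : X} {𝒰 : Set (Set X)}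
    (h𝒰o : ∀ U ∈ 𝒰, IsOpen U) (h𝒰c : ⋃₀ 𝒰 = Set.univ)
    (K : Subgroup (FundamentalGroup X x₀))
    (hgen : ∀ (y : X) (α : Path x₀ y) (β : Path y y) (U : Set X), U ∈ 𝒰 → (∀ s, β s ∈ U) →
      loopClass (α.trans (β.trans α.symm)) ∈ K) :
    IsOpen {γ : Path x₀ x₀ | loopClass γ ∈ K} := by
  rw [isOpen_iff_mem_nhds]
  intro γ hγ
  have hcov : ∀ s : I, ∃ U, U ∈ 𝒰 ∧ γ s ∈ U := by
    intro s
    have : γ s ∈ ⋃₀ 𝒰 := by rw [h𝒰c]; trivial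
    simpa [Set.mem_sUnion] using this
  choose Us hUs hUmem using hcov
  set W' : I → Set X := fun s => pathComponentIn (Us s) (γ s) with hW'
  have hW'o : ∀ s, IsOpen (W' s) := fun s => (h𝒰o _ (hUs s)).pathComponentIn _
  have hW'm : ∀ s, γ s ∈ W' s := fun s => mem_pathComponentIn_self (hUmem s)
  obtain ⟨t, ht0, htmono, ⟨m, htm⟩, hseg⟩ :=
    exists_monotone_Icc_subset_open_cover_unitInterval (c := fun s : I => γ ⁻¹' (W' s))
      (fun s => (hW'o s).preimage γ.continuous)
      (fun s _ => Set.mem_iUnion.mpr ⟨s, hW'm s⟩)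
  choose ind hind using hseg
  set W : ℕ → Set X := fun k => W' (ind k) with hWdef
  have hm0 : 0 < m := by
    rcases Nat.eq_zero_or_pos m with h0 | h
    · exfalso
      have h01 : (0 : I) = 1 := ht0 ▸ htm 0 (by omega)
      have := congrArg Subtype.val h01
      norm_num at this
    · exact h
  have hWγ : ∀ k, ∀ s : I, s ∈ Set.Icc (t k) (t (k+1)) → γ s ∈ W k := fun k s hs => hind k hs
  set O : ℕ → Set X := fun j => pathComponentIn (W (j-1) ∩ W j) (γ (t j)) with hOdef
  have hjmem : ∀ j, 0 < j → j < m → γ (t j) ∈ W (j-1) ∩ W j := by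
    intro j h0 hm
    constructor
    · refine hWγ (j-1) (t j) ⟨htmono (by omega), ?_⟩
      have hj1 : (j-1)+1 = j := by omega
      rw [hj1]
    · exact hWγ j (t j) ⟨le_rfl, htmono (by omega)⟩
  have hOo : ∀ j, 0 < j → j < m → IsOpen (O j) := fun j h0 hm =>
    ((hW'o _).inter (hW'o _)).pathComponentIn _
  have hOγ : ∀ j, 0 < j → j < m → γ (t j) ∈ O j := fun j h0 hm =>
    mem_pathComponentIn_self (hjmem j h0 hm)
  have hOpc : ∀ j, 0 < j → j < m → IsPathConnected (O j) := fun j h0 hm =>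
    isPathConnected_pathComponentIn (hjmem j h0 hm)
  have hOW : ∀ j, 0 < j → j < m → O j ⊆ W (j-1) ∩ W j := fun j _ _ => pathComponentIn_subset
  set M : Set C(I, X) :=
    (⋂ k ∈ Finset.range m, {f : C(I,X) | Set.MapsTo f (Set.Icc (t k) (t (k+1))) (W k)}) ∩
      ⋂ j ∈ Finset.range m, {f : C(I,X) | 0 < j → f (t j) ∈ O j} with hM
  have hMopen : IsOpen M := by
    apply IsOpen.inter
    · apply isOpen_biInter_finset
      intro k _
      have hic : IsCompact (Set.Icc (t k) (t (k+1))) := by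
        have he : (Set.Icc (t k) (t (k+1))) =
            Subtype.val ⁻¹' (Set.Icc ((t k : ℝ)) ((t (k+1) : ℝ))) := by
          ext s
          simp [Set.mem_Icc, Subtype.coe_le_coe]
        rw [he]
        exact (isClosed_Icc.preimage continuous_subtype_val).isCompact
      exact ContinuousMap.isOpen_setOf_mapsTo hic (hW'o _)
    · apply isOpen_biInter_finset
      intro j hj
      by_cases h0 : 0 < j
      · have he : {f : C(I,X) | 0 < j → f (t j) ∈ O j} =
            (fun f : C(I,X) => f (t j)) ⁻¹' (O j) := by
          ext f; simp [h0]
        rw [he]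
        exact (hOo j h0 (Finset.mem_range.mp hj)).preimage (continuous_eval_const _)
      · have he : {f : C(I,X) | 0 < j → f (t j) ∈ O j} = Set.univ := by
          ext f; simp [h0]
        rw [he]
        exact isOpen_univ
  have hγM : γ.toContinuousMap ∈ M := by
    constructor
    · refine Set.mem_iInter₂.mpr fun k _ => fun s hs => ?_
      exact hWγ k s hs
    · refine Set.mem_iInter₂.mpr fun j hj => fun h0 => ?_
      exact hOγ j h0 (Finset.mem_range.mp hj)
  have hsub : ((fun δ : Path x₀ x₀ => δ.toContinuousMap) ⁻¹' M) ⊆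
      {δ : Path x₀ x₀ | loopClass δ ∈ K} := by
    intro δ hδ
    obtain ⟨hδ1, hδ2⟩ := hδ
    refine key_claim K γ δ t m hm0 ht0 (fun j hj => htm j hj) htmono W O hWγ ?_ hOγ ?_ hOpc hOW
      ?_ hγ
    · intro k hk s hs
      exact Set.mem_iInter₂.mp hδ1 k (Finset.mem_range.mpr hk) hs
    · intro j h0 hj
      exact Set.mem_iInter₂.mp hδ2 j (Finset.mem_range.mpr hj) h0
    · rintro y α β ⟨k, hk, hβ⟩
      exact hgen y α β (Us (ind k)) (hUs _) (fun s => pathComponentIn_subset (hβ s))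
  refine Filter.mem_of_superset ?_ hsub
  exact (hMopen.preimage continuous_induced_dom).mem_nhds hγM

end LemmaA


section Spanier

lemma spanier_normal (x₀ : X) (𝒰 : Set (Set X)) : (spanierGroupAt x₀ 𝒰).Normal := by
  constructor
  intro n hn g
  obtain ⟨f, rfl⟩ : ∃ f : Path x₀ x₀, loopClass f = g := by
    obtain ⟨f, hf⟩ := Quotient.exists_rep (eh g)
    exact ⟨f, eh_injective hf⟩
  refine Subgroup.closure_induction ?_ ?_ ?_ ?_ hn
  · rintro x ⟨y, α, β, U, hU, hβ, rfl⟩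
    have heq : loopClass f * loopClass (α.trans (β.trans α.symm)) * (loopClass f)⁻¹ =
        loopClass ((f.symm.trans α).trans (β.trans (f.symm.trans α).symm)) := by
      apply eh_injective
      rw [eh_mul, eh_mul, eh_inv, eh_loopClass', eh_loopClass', eh_loopClass']
      simp only [comp_lift', symm_lift]
      simp
    rw [heq]
    exact Subgroup.subset_closure ⟨y, f.symm.trans α, β, U, hU, hβ, rfl⟩
  · simp only [mul_one, mul_inv_cancel]; exact Subgroup.one_mem _
  · intro x y hx hy px py
    have heq : loopClass f * (x * y) * (loopClass f)⁻¹ =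
        (loopClass f * x * (loopClass f)⁻¹) * (loopClass f * y * (loopClass f)⁻¹) := by group
    rw [heq]
    exact Subgroup.mul_mem _ px py
  · intro x hx px
    have heq : loopClass f * x⁻¹ * (loopClass f)⁻¹ =
        (loopClass f * x * (loopClass f)⁻¹)⁻¹ := by group
    rw [heq]
    exact Subgroup.inv_mem _ px

end Spanier


section Extract

lemma exists_nbhd_of_isOpen {x₀ : X} {P : Set (Path x₀ x₀)} (hP : IsOpen P)
    (hrefl : Path.refl x₀ ∈ P) :
    ∃ U : Set X, IsOpen U ∧ x₀ ∈ U ∧ ∀ lam : Path x₀ x₀, (∀ s, lam s ∈ U) → lam ∈ P := by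
  classical
  obtain ⟨V, hV, hVP⟩ := isOpen_induced_iff.mp hP
  have hbasis := TopologicalSpace.isTopologicalBasis_of_subbasis
    (ContinuousMap.compactOpen_eq (X := I) (Y := X))
  have hreflV : (Path.refl x₀).toContinuousMap ∈ V := by
    rw [← hVP] at hrefl; exact hrefl
  obtain ⟨v, hvB, hmemv, hvV⟩ := hbasis.exists_subset_of_mem_open hreflV hV
  obtain ⟨T, ⟨hTfin, hTsub⟩, rfl⟩ := hvB
  have hchoice : ∀ s ∈ T, ∃ KU : Set I × Set X, IsCompact KU.1 ∧ IsOpen KU.2 ∧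
      s = {f : C(I,X) | Set.MapsTo f KU.1 KU.2} := by
    intro s hs
    obtain ⟨Kc, hKc, Uo, hUo, rfl⟩ := hTsub hs
    exact ⟨(Kc, Uo), hKc, hUo, rfl⟩
  choose! KU hKc hUo hsEq using hchoice
  refine ⟨⋂ s ∈ T, {x : X | ∀ k ∈ (KU s).1, x ∈ (KU s).2}, ?_, ?_, ?_⟩
  · apply hTfin.isOpen_biInter
    intro s hs
    by_cases hne : (KU s).1.Nonempty
    · have he : {x : X | ∀ k ∈ (KU s).1, x ∈ (KU s).2} = (KU s).2 := by
        ext z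
        constructor
        · intro hz
          obtain ⟨k, hk⟩ := hne
          exact hz k hk
        · intro hz k _
          exact hz
      rw [he]
      exact hUo s hs
    · have he : {x : X | ∀ k ∈ (KU s).1, x ∈ (KU s).2} = Set.univ := by
        ext z
        simp only [Set.mem_univ, iff_true, Set.mem_setOf_eq]
        intro k hk
        exact absurd ⟨k, hk⟩ hne
      rw [he]
      exact isOpen_univ
  · refine Set.mem_iInter₂.mpr fun s hs k hk => ?_
    have := Set.mem_sInter.mp hmemv s hs
    rw [hsEq s hs] at this
    exact this hk
  · intro lam hlam
    rw [← hVP]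
    apply hvV
    refine Set.mem_sInter.mpr fun s hs => ?_
    rw [hsEq s hs]
    intro k hk
    exact (Set.mem_iInter₂.mp (hlam k) s hs) k hk

end Extract

section SLT

lemma spanier_le_of_SLT [LocallyPathConnectedSpace X] {x₀ : X}
    {H : Subgroup (FundamentalGroup X x₀)} (hX : StrongHSLTAt x₀ H) {U : Set X}
    (hUo : IsOpen U) (hUx : x₀ ∈ U)
    (hUH : ∀ lam : Path x₀ x₀, (∀ s, lam s ∈ U) → loopClass lam ∈ H) :
    ∃ 𝒰 : Set (Set X), IsOpenCover 𝒰 ∧ spanierGroupAt x₀ 𝒰 ≤ H := by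
  choose V hVo hVx hVp using fun x => hX x U hUo hUx
  set V' : X → Set X := fun x => pathComponentIn (V x) x with hV'
  refine ⟨Set.range V', ⟨?_, ?_⟩, ?_⟩
  · rintro _ ⟨x, rfl⟩
    exact (hVo x).pathComponentIn _
  · apply Set.eq_univ_of_forall
    intro z
    exact ⟨V' z, ⟨z, rfl⟩, mem_pathComponentIn_self (hVx z)⟩
  · rw [spanierGroupAt]
    refine (Subgroup.closure_le H).mpr ?_
    rintro g ⟨y, α, β, _, ⟨x, rfl⟩, hβ, rfl⟩
    have hy : y ∈ V' x := by rw [← β.source]; exact hβ 0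
    obtain ⟨sg, hsg⟩ := (isPathConnected_pathComponentIn (hVx x)).joinedIn x
      (mem_pathComponentIn_self (hVx x)) y hy
    set β' : Path x x := sg.trans (β.trans sg.symm) with hβ'
    have hβ'V : ∀ s, β' s ∈ V x :=
      trans_mem (fun s => pathComponentIn_subset (hsg s))
        (trans_mem (fun s => pathComponentIn_subset (hβ s))
          (symm_mem (fun s => pathComponentIn_subset (hsg s))))
    obtain ⟨lam, hlamU, hlamH⟩ := hVp x β' hβ'V (α.trans sg.symm)
    have h1 : loopClass lam ∈ H := hUH lam hlamU
    have h2 : loopClass ((α.trans sg.symm).trans (β'.trans (α.trans sg.symm).symm)) ∈ H := by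
      have hsplit : loopClass ((α.trans sg.symm).trans (β'.trans (α.trans sg.symm).symm)) =
          (loopClass ((α.trans sg.symm).trans (β'.trans (α.trans sg.symm).symm)) *
            (loopClass lam)⁻¹) * loopClass lam := by group
      rw [hsplit]
      exact H.mul_mem hlamH h1
    have heq : loopClass (α.trans (β.trans α.symm)) =
        loopClass ((α.trans sg.symm).trans (β'.trans (α.trans sg.symm).symm)) := by
      apply eh_injective
      rw [eh_loopClass', eh_loopClass', hβ']
      simp only [comp_lift', symm_lift]
      simp
    rw [heq]
    exact h2

end SLT

section Forward

lemma open_H_of_open_core {x₀ : X} {H : Subgroup (FundamentalGroup X x₀)}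
    (h : IsOpen {γ : Path x₀ x₀ | loopClass γ ∈ H.normalCore}) :
    IsOpen {γ : Path x₀ x₀ | loopClass γ ∈ H} := by
  rw [isOpen_iff_mem_nhds]
  intro δ hδ
  have hc : Continuous (fun η : Path x₀ x₀ => η.trans δ.symm) :=
    Continuous.path_trans continuous_id continuous_const
  have hmem : δ ∈ (fun η : Path x₀ x₀ => η.trans δ.symm) ⁻¹'
      {γ | loopClass γ ∈ H.normalCore} := by
    show loopClass (δ.trans δ.symm) ∈ H.normalCore
    have h1 : loopClass (δ.trans δ.symm) = 1 := by
      apply eh_injective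
      rw [eh_loopClass', eh_one, comp_lift', symm_lift]
      simp
    rw [h1]
    exact Subgroup.one_mem _
  refine Filter.mem_of_superset ((h.preimage hc).mem_nhds hmem) ?_
  intro η hη
  have hη' : loopClass (η.trans δ.symm) ∈ H := H.normalCore_le hη
  have heq : loopClass (η.trans δ.symm) = (loopClass δ)⁻¹ * loopClass η := by
    apply eh_injective
    rw [eh_mul, eh_inv, eh_loopClass', eh_loopClass', eh_loopClass', comp_lift', symm_lift]
  show loopClass η ∈ H
  have hsplit : loopClass η = loopClass δ * ((loopClass δ)⁻¹ * loopClass η) := by group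
  rw [hsplit, ← heq]
  exact H.mul_mem hδ hη'

end Forward

end MyAux

theorem normalCore_open_iff_open
    {X : Type*} [TopologicalSpace X] [ConnectedSpace X] [LocallyPathConnectedSpace X]
    (x₀ : X) (H : Subgroup (FundamentalGroup X x₀)) (hX : StrongHSLTAt x₀ H) :
    IsOpen[qtop x₀] (H.normalCore : Set (FundamentalGroup X x₀)) ↔
      IsOpen[qtop x₀] (H : Set (FundamentalGroup X x₀)) := by
  have hiff : ∀ K : Subgroup (FundamentalGroup X x₀),
      (IsOpen[qtop x₀] (K : Set (FundamentalGroup X x₀)) ↔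
        IsOpen {γ : Path x₀ x₀ | loopClass γ ∈ K}) := by
    intro K
    show IsOpen[TopologicalSpace.coinduced _ _] _ ↔ _
    rw [isOpen_coinduced]
    exact Iff.rfl
  rw [hiff, hiff]
  constructor
  · exact MyAux.open_H_of_open_core
  · intro hH
    have h1 : loopClass (Path.refl x₀) = 1 := by
      apply MyAux.eh_injective
      rw [MyAux.eh_loopClass', MyAux.eh_one]
      exact MyAux.id_lift.symm
    have hrefl : Path.refl x₀ ∈ {γ : Path x₀ x₀ | loopClass γ ∈ H} := by
      show loopClass (Path.refl x₀) ∈ H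
      rw [h1]
      exact H.one_mem
    obtain ⟨U, hUo, hUx, hUH⟩ := MyAux.exists_nbhd_of_isOpen hH hrefl
    obtain ⟨𝒰, ⟨h𝒰o, h𝒰c⟩, h𝒰H⟩ := MyAux.spanier_le_of_SLT hX hUo hUx (fun lam h => hUH lam h)
    have hnormal : (spanierGroupAt x₀ 𝒰).Normal := MyAux.spanier_normal x₀ 𝒰
    have hle : spanierGroupAt x₀ 𝒰 ≤ H.normalCore :=
      (@Subgroup.normal_le_normalCore _ _ H _ hnormal).mpr h𝒰H
    exact MyAux.isOpen_loopClass_preimage h𝒰o h𝒰c H.normalCore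
      (fun y α β U' hU' hβ => hle (Subgroup.subset_closure ⟨y, α, β, U', hU', hβ, rfl⟩))

end
end

section
/- Let p : X̃ → X be a semicovering map with p∗π₁(X̃, x̃₀) = H. If X is connected, locally path connected, and a strong H-SLT space at x₀, then p is a covering map. -/
open CategoryTheory unitInterval
open scoped Topology

attribute [local instance] Path.Homotopic.setoid

noncomputable section

variable {X : Type*} [TopologicalSpace X]

/-- A semicovering map: a local homeomorphism with unique continuous lifting of paths
and of homotopies. -/
structure IsSemicoveringMap {E : Type*} [TopologicalSpace E] (p : E → X) : Prop where
  isLocalHomeomorph : IsLocalHomeomorph p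
  path_lift : ∀ (γ : C(I, X)) (e : E), p e = γ 0 →
    ∃! γ' : C(I, E), p ∘ γ' = γ ∧ γ' 0 = e
  homotopy_lift : ∀ (Hm : C(I × I, X)) (e : E), p e = Hm (0, 0) →
    ∃! H' : C(I × I, E), p ∘ H' = Hm ∧ H' (0, 0) = e

set_option linter.unusedSectionVars false

namespace IsSemicoveringMap

variable {E X' : Type*} [TopologicalSpace E] [TopologicalSpace X'] {p : E → X'}
variable (hp : IsSemicoveringMap p)

/-- The lift of a continuous map `I → X'` starting at `e`. -/
def liftCM (γ : C(I, X')) (e : E) (he : p e = γ 0) : C(I, E) :=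
  (hp.path_lift γ e he).exists.choose

lemma liftCM_proj {γ : C(I, X')} {e : E} (he : p e = γ 0) (t : I) :
    p (hp.liftCM γ e he t) = γ t :=
  congrFun (hp.path_lift γ e he).exists.choose_spec.1 t

lemma liftCM_zero {γ : C(I, X')} {e : E} (he : p e = γ 0) : hp.liftCM γ e he 0 = e :=
  (hp.path_lift γ e he).exists.choose_spec.2

lemma liftCM_unique {γ : C(I, X')} {e : E} (he : p e = γ 0) (g : C(I, E))
    (hg : ∀ t, p (g t) = γ t) (h0 : g 0 = e) : g = hp.liftCM γ e he :=
  (hp.path_lift γ e he).unique ⟨funext hg, h0⟩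
    ⟨funext (hp.liftCM_proj he), hp.liftCM_zero he⟩

variable {x y z : X'}

lemma he' {γ : Path x y} {e : E} (he : p e = x) : p e = γ.toContinuousMap 0 := by
  simpa using he

/-- Endpoint of the lift of a path. -/
def liftEnd (γ : Path x y) (e : E) (he : p e = x) : E :=
  hp.liftCM γ.toContinuousMap e (he' he) 1

lemma liftEnd_eq {γ : Path x y} {e e' : E} (he : p e = x) (Γ : Path e e')
    (hΓ : ∀ t, p (Γ t) = γ t) : hp.liftEnd γ e he = e' := by
  have h := hp.liftCM_unique (γ := γ.toContinuousMap) (he' he) Γ.toContinuousMap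
    (fun t => by simpa using hΓ t) (by simp)
  have := ContinuousMap.congr_fun h 1
  simp only [Path.coe_toContinuousMap] at this
  rw [liftEnd, ← this]
  simp

/-- The lift of a path, as a path. -/
def liftPath (γ : Path x y) (e : E) (he : p e = x) : Path e (hp.liftEnd γ e he) where
  toContinuousMap := hp.liftCM γ.toContinuousMap e (he' he)
  source' := hp.liftCM_zero (he' he)
  target' := rfl

lemma liftPath_proj {γ : Path x y} {e : E} (he : p e = x) (t : I) :
    p (hp.liftPath γ e he t) = γ t := by
  exact hp.liftCM_proj (γ := γ.toContinuousMap) (he' he) t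

lemma liftEnd_proj {γ : Path x y} {e : E} (he : p e = x) :
    p (hp.liftEnd γ e he) = y := by
  have := hp.liftPath_proj (γ := γ) he 1
  simpa using this

lemma liftEnd_congr {γ : Path x y} {e e' : E} (h : e = e') {he : p e = x} {he' : p e' = x} :
    hp.liftEnd γ e he = hp.liftEnd γ e' he' := by subst h; rfl

lemma liftEnd_trans (γ₁ : Path x y) (γ₂ : Path y z) (e : E) (he : p e = x) :
    hp.liftEnd (γ₁.trans γ₂) e he
      = hp.liftEnd γ₂ (hp.liftEnd γ₁ e he) (hp.liftEnd_proj he) := by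
  refine hp.liftEnd_eq he ((hp.liftPath γ₁ e he).trans
    (hp.liftPath γ₂ _ (hp.liftEnd_proj he))) fun t => ?_
  rw [Path.trans_apply, Path.trans_apply]
  split_ifs <;> apply liftPath_proj

lemma liftEnd_symm (γ : Path x y) (e : E) (he : p e = x) :
    hp.liftEnd γ.symm (hp.liftEnd γ e he) (hp.liftEnd_proj he) = e := by
  refine hp.liftEnd_eq _ (hp.liftPath γ e he).symm fun t => ?_
  rw [Path.symm_apply, Path.symm_apply]
  exact hp.liftPath_proj he _

lemma liftEnd_inj (γ : Path x y) {e₁ e₂ : E} {h₁ : p e₁ = x} {h₂ : p e₂ = x}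
    (h : hp.liftEnd γ e₁ h₁ = hp.liftEnd γ e₂ h₂) : e₁ = e₂ := by
  have k₁ := hp.liftEnd_symm γ e₁ h₁
  have k₂ := hp.liftEnd_symm γ e₂ h₂
  rw [← k₁, ← k₂]
  exact hp.liftEnd_congr h

lemma liftEnd_map (hcont : Continuous p) {e e' : E} (Γ : Path e e') {he : p e = p e} :
    hp.liftEnd (Γ.map hcont) e he = e' :=
  hp.liftEnd_eq he Γ fun t => rfl

lemma liftEnd_cast {x' y' : X'} (γ : Path x y) (hx : x' = x) (hy : y' = y) {e : E}
    (he : p e = x') : hp.liftEnd (γ.cast hx hy) e he = hp.liftEnd γ e (by rw [← hx]; exact he) := by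
  refine hp.liftEnd_eq he (hp.liftPath γ e (by rw [← hx]; exact he)) fun t => ?_
  rw [show ((γ.cast hx hy) t : X') = γ t from congrFun (Path.cast_coe γ hx hy) t]
  exact hp.liftPath_proj _ t

/-- Monodromy: lifts of homotopic paths starting at the same point have the same endpoint. -/
lemma liftEnd_homotopic {γ₁ γ₂ : Path x y} (h : γ₁.Homotopic γ₂) {e : E} (he : p e = x) :
    hp.liftEnd γ₁ e he = hp.liftEnd γ₂ e he := by
  obtain ⟨F⟩ := h
  have h00 : p e = F.toContinuousMap (0, 0) := by
    rw [show F.toContinuousMap (0, 0) = γ₁ 0 from F.apply_zero 0]; simpa using he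
  obtain ⟨K, ⟨hK1, hK2⟩, -⟩ := hp.homotopy_lift F.toContinuousMap e h00
  have hKp : ∀ q, p (K q) = F.toContinuousMap q := fun q => congrFun hK1 q
  -- bottom edge is constant
  have hbot : ∀ t : I, K (t, 0) = e := by
    have hc : p e = (ContinuousMap.const I x) 0 := he
    have h1 := hp.liftCM_unique hc (K.comp ⟨fun t => (t, 0), by fun_prop⟩)
      (fun t => by simpa [F.source t] using hKp (t, 0)) (by simpa using hK2)
    have h2 := hp.liftCM_unique hc (ContinuousMap.const I e) (fun t => he) rfl
    intro t
    have := ContinuousMap.congr_fun (h1.trans h2.symm) t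
    simpa using this
  -- top edge is constant
  have htop : ∀ t : I, K (t, 1) = K (0, 1) := by
    have hc : p (K (0, 1)) = (ContinuousMap.const I y) 0 := by
      simpa [F.target 0] using hKp (0, 1)
    have h1 := hp.liftCM_unique hc (K.comp ⟨fun t => (t, 1), by fun_prop⟩)
      (fun t => by simpa [F.target t] using hKp (t, 1)) (by simp)
    have h2 := hp.liftCM_unique hc (ContinuousMap.const I (K (0, 1)))
      (fun t => by simpa [F.target 0] using hKp (0, 1)) rfl
    intro t
    have := ContinuousMap.congr_fun (h1.trans h2.symm) t
    simpa using this
  have hside : ∀ (γ : Path x y) (s : I) (hs : ∀ u : I, F.toContinuousMap (s, u) = γ u)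
      (hs0 : K (s, 0) = e), hp.liftEnd γ e he = K (s, 1) := by
    intro γ s hs hs0
    have h1 := hp.liftCM_unique (γ := γ.toContinuousMap) (he' he)
      (K.comp ⟨fun u => (s, u), by fun_prop⟩)
      (fun u => by simpa [hs u] using hKp (s, u)) (by simpa using hs0)
    have := ContinuousMap.congr_fun h1 1
    simp only [ContinuousMap.comp_apply, ContinuousMap.coe_mk] at this
    rw [liftEnd, ← this]
  have e1 := hside γ₁ 0 (fun u => F.apply_zero u) (hbot 0)
  have e2 := hside γ₂ 1 (fun u => F.apply_one u) (hbot 1)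
  rw [e1, e2, htop 1]

end IsSemicoveringMap


section Aux

variable {X : Type*} [TopologicalSpace X]

lemma loopClass_hom {x : X} (γ : Path x x) :
    FundamentalGroup.toPath (loopClass γ) = (⟦γ⟧ : Path.Homotopic.Quotient x x) := rfl

lemma loopClass_mul {x : X} (a b : Path x x) :
    loopClass a * loopClass b = loopClass (b.trans a) := by
  rfl

lemma loopClass_inj {x : X} {a b : Path x x} (h : loopClass a = loopClass b) :
    (⟦a⟧ : Path.Homotopic.Quotient x x) = ⟦b⟧ := by
  exact h

end Aux


lemma IsSemicoveringMap.liftEnd_fun_congr {E X' : Type*} [TopologicalSpace E]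
    [TopologicalSpace X'] {p : E → X'} (hp : IsSemicoveringMap p) {x y : X'}
    {γ γ' : Path x y} (h : γ = γ') (e : E) (he : p e = x) :
    hp.liftEnd γ e he = hp.liftEnd γ' e he := by rw [h]

lemma key_inj {E X' : Type*} [TopologicalSpace E] [TopologicalSpace X']
    [PathConnectedSpace E]
    {p : E → X'} (hcont : Continuous p) (hp : IsSemicoveringMap p)
    {e₀ : E} {x₀ : X'} (he : p e₀ = x₀)
    {H : Subgroup (FundamentalGroup X' x₀)}
    (hH : ∀ g, g ∈ H ↔ ∃ γ : Path e₀ e₀, loopClass ((γ.map hcont).cast he.symm he.symm) = g)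
    {U : Set X'}
    (hUlift : ∀ lam : Path x₀ x₀, (∀ t, lam t ∈ U) → hp.liftEnd lam e₀ he = e₀)
    {x : X'} {V : Set X'} (hVpc : IsPathConnected V) (hxV : x ∈ V)
    (hSLT : ∀ β : Path x x, (∀ t, β t ∈ V) → ∀ α : Path x₀ x,
        ∃ lam : Path x₀ x₀, (∀ t, lam t ∈ U) ∧
          loopClass (α.trans (β.trans α.symm)) * (loopClass lam)⁻¹ ∈ H)
    {e₁ e₂ : E} (h1V : p e₁ ∈ V) (hpe : p e₂ = p e₁)
    (hJ : JoinedIn (p ⁻¹' V) e₁ e₂) : e₁ = e₂ := by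
  obtain ⟨δ, hδ⟩ := hJ
  obtain ⟨c, hc⟩ := hVpc.joinedIn x hxV (p e₁) h1V
  let a : Path e₀ e₁ := PathConnectedSpace.somePath e₀ e₁
  let pa : Path x₀ (p e₁) := (a.map hcont).cast he.symm rfl
  let pδ : Path (p e₁) (p e₁) := (δ.map hcont).cast rfl hpe.symm
  let α : Path x₀ x := pa.trans c.symm
  let β : Path x x := c.trans (pδ.trans c.symm)
  have hβV : ∀ t, β t ∈ V := by
    intro t
    rw [show β t = (c.trans (pδ.trans c.symm)) t from rfl, Path.trans_apply]
    split_ifs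
    · exact hc _
    · rw [Path.trans_apply]
      split_ifs
      · show pδ _ ∈ V
        rw [show ∀ u, pδ u = p (δ u) from fun u =>
          (congrFun (Path.cast_coe _ _ _) u).trans (congrFun (Path.map_coe δ hcont) u)]
        exact hδ _
      · rw [Path.symm_apply]
        exact hc _
  obtain ⟨lam, hlamU, hmem⟩ := hSLT β hβV α
  obtain ⟨g, hg⟩ := (hH _).mp hmem
  set P : Path x₀ x₀ := (g.map hcont).cast he.symm he.symm with hP
  have hLP : loopClass (α.trans (β.trans α.symm)) = loopClass (lam.trans P) := by
    rw [← loopClass_mul P lam, hg, inv_mul_cancel_right]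
  have hhom : (α.trans (β.trans α.symm)).Homotopic (lam.trans P) :=
    Quotient.exact (loopClass_inj hLP)
  have hmain := hp.liftEnd_homotopic hhom he
  -- the lift of `lam.trans P` at `e₀` ends at `e₀`
  have hPa : p e₀ = x₀ := he
  have hrhs : hp.liftEnd (lam.trans P) e₀ he = e₀ := by
    calc hp.liftEnd (lam.trans P) e₀ he
        = hp.liftEnd P (hp.liftEnd lam e₀ he) (hp.liftEnd_proj he) :=
          hp.liftEnd_trans lam P e₀ he
      _ = hp.liftEnd P e₀ he := hp.liftEnd_congr (hUlift lam hlamU)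
      _ = hp.liftEnd (g.map hcont) e₀ rfl := hp.liftEnd_cast (g.map hcont) he.symm he.symm he
      _ = e₀ := hp.liftEnd_map hcont g
  -- compute the lift of the left-hand side
  have hE1 : hp.liftEnd pa e₀ he = e₁ := by
    calc hp.liftEnd pa e₀ he
        = hp.liftEnd (a.map hcont) e₀ rfl := hp.liftEnd_cast (a.map hcont) he.symm rfl he
      _ = e₁ := hp.liftEnd_map hcont a
  have hpe1 : p e₁ = p e₁ := rfl
  set w : E := hp.liftEnd c.symm e₁ hpe1 with hwdef
  have hwx : p w = x := hp.liftEnd_proj hpe1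
  have hcw : hp.liftEnd c w hwx = e₁ := by
    calc hp.liftEnd c w hwx
        = hp.liftEnd c.symm.symm w hwx := hp.liftEnd_fun_congr (Path.symm_symm c).symm w hwx
      _ = e₁ := hp.liftEnd_symm c.symm e₁ hpe1
  have hαend : hp.liftEnd α e₀ he = w := by
    calc hp.liftEnd α e₀ he
        = hp.liftEnd c.symm (hp.liftEnd pa e₀ he) (hp.liftEnd_proj he) :=
          hp.liftEnd_trans pa c.symm e₀ he
      _ = w := hp.liftEnd_congr hE1
  have hpδe1 : hp.liftEnd pδ e₁ hpe1 = e₂ := by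
    calc hp.liftEnd pδ e₁ hpe1
        = hp.liftEnd (δ.map hcont) e₁ rfl := hp.liftEnd_cast (δ.map hcont) rfl hpe.symm hpe1
      _ = e₂ := hp.liftEnd_map hcont δ
  have hpe2 : p e₂ = p e₁ := hpe
  set w₂ : E := hp.liftEnd c.symm e₂ hpe2 with hw2def
  have hw₂x : p w₂ = x := hp.liftEnd_proj hpe2
  have hβend : hp.liftEnd β w hwx = w₂ := by
    calc hp.liftEnd β w hwx
        = hp.liftEnd (pδ.trans c.symm) (hp.liftEnd c w hwx) (hp.liftEnd_proj hwx) :=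
          hp.liftEnd_trans c (pδ.trans c.symm) w hwx
      _ = hp.liftEnd (pδ.trans c.symm) e₁ hpe1 := hp.liftEnd_congr hcw
      _ = hp.liftEnd c.symm (hp.liftEnd pδ e₁ hpe1) (hp.liftEnd_proj hpe1) :=
          hp.liftEnd_trans pδ c.symm e₁ hpe1
      _ = w₂ := hp.liftEnd_congr hpδe1
  have hcw₂ : hp.liftEnd c w₂ hw₂x = e₂ := by
    calc hp.liftEnd c w₂ hw₂x
        = hp.liftEnd c.symm.symm w₂ hw₂x := hp.liftEnd_fun_congr (Path.symm_symm c).symm w₂ hw₂x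
      _ = e₂ := hp.liftEnd_symm c.symm e₂ hpe2
  have hlhs : hp.liftEnd (α.trans (β.trans α.symm)) e₀ he = hp.liftEnd pa.symm e₂ hpe2 := by
    calc hp.liftEnd (α.trans (β.trans α.symm)) e₀ he
        = hp.liftEnd (β.trans α.symm) (hp.liftEnd α e₀ he) (hp.liftEnd_proj he) :=
          hp.liftEnd_trans α (β.trans α.symm) e₀ he
      _ = hp.liftEnd (β.trans α.symm) w hwx := hp.liftEnd_congr hαend
      _ = hp.liftEnd α.symm (hp.liftEnd β w hwx) (hp.liftEnd_proj hwx) :=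
          hp.liftEnd_trans β α.symm w hwx
      _ = hp.liftEnd α.symm w₂ hw₂x := hp.liftEnd_congr hβend
      _ = hp.liftEnd (c.symm.symm.trans pa.symm) w₂ hw₂x :=
          hp.liftEnd_fun_congr (Path.trans_symm pa c.symm) w₂ hw₂x
      _ = hp.liftEnd pa.symm (hp.liftEnd c.symm.symm w₂ hw₂x) (hp.liftEnd_proj hw₂x) :=
          hp.liftEnd_trans c.symm.symm pa.symm w₂ hw₂x
      _ = hp.liftEnd pa.symm (hp.liftEnd c w₂ hw₂x) (hp.liftEnd_proj hw₂x) := by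
          refine hp.liftEnd_congr ?_
          exact hp.liftEnd_fun_congr (Path.symm_symm c) w₂ hw₂x
      _ = hp.liftEnd pa.symm e₂ hpe2 := hp.liftEnd_congr hcw₂
  have he2 : hp.liftEnd pa.symm e₂ hpe2 = e₀ := by rw [← hlhs, hmain, hrhs]
  have he1 : hp.liftEnd pa.symm e₁ hpe1 = e₀ := by
    calc hp.liftEnd pa.symm e₁ hpe1
        = hp.liftEnd pa.symm (hp.liftEnd pa e₀ he) (hp.liftEnd_proj he) :=
          (hp.liftEnd_congr hE1).symm
      _ = e₀ := hp.liftEnd_symm pa e₀ he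
  exact hp.liftEnd_inj pa.symm (he1.trans he2.symm)


theorem semicovering_isCoveringMap_of_strongHSLTAt
    {E X' : Type*} [TopologicalSpace E] [TopologicalSpace X']
    [ConnectedSpace X'] [LocallyPathConnectedSpace X']
    [ConnectedSpace E] [LocallyPathConnectedSpace E]
    (p : E → X') (hcont : Continuous p) (hp : IsSemicoveringMap p)
    (e₀ : E) (x₀ : X') (he : p e₀ = x₀)
    (H : Subgroup (FundamentalGroup X' x₀))
    (hH : ∀ g, g ∈ H ↔ ∃ γ : Path e₀ e₀, loopClass ((γ.map hcont).cast he.symm he.symm) = g)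
    (hX : StrongHSLTAt x₀ H) : IsCoveringMap p := by
  classical
  haveI : PathConnectedSpace X' := pathConnectedSpace_iff_connectedSpace.mpr inferInstance
  haveI : PathConnectedSpace E := pathConnectedSpace_iff_connectedSpace.mpr inferInstance
  obtain ⟨φ, he₀φ, hpφ⟩ := hp.isLocalHomeomorph e₀
  set U : Set X' := φ.target with hUdef
  have hx₀U : x₀ ∈ U := by rw [← he, hpφ]; exact φ.map_source he₀φ
  have hUlift : ∀ lam : Path x₀ x₀, (∀ t, lam t ∈ U) → hp.liftEnd lam e₀ he = e₀ := by
    intro lam hlam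
    have hsymm_cont : Continuous fun t => φ.symm (lam t) :=
      φ.continuousOn_symm.comp_continuous lam.continuous fun t => hlam t
    have hval : ∀ t, p (φ.symm (lam t)) = lam t := fun t => by
      rw [hpφ]; exact φ.right_inv (hlam t)
    have hse : φ.symm x₀ = e₀ := by rw [← he, hpφ]; exact φ.left_inv he₀φ
    exact hp.liftEnd_eq he
      ⟨⟨fun t => φ.symm (lam t), hsymm_cont⟩, by simp [hse], by simp [hse]⟩ hval
  intro x
  obtain ⟨fx, hfx⟩ : ∃ e, p e = x :=
    ⟨hp.liftEnd (PathConnectedSpace.somePath x₀ x) e₀ he, hp.liftEnd_proj he⟩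
  obtain ⟨V₀, hV₀open, hxV₀, hSLT₀⟩ := hX x U φ.open_target hx₀U
  set V : Set X' := pathComponentIn V₀ x with hVdef
  have hVopen : IsOpen V := hV₀open.pathComponentIn x
  have hxV : x ∈ V := mem_pathComponentIn_self hxV₀
  have hVpc : IsPathConnected V := isPathConnected_pathComponentIn hxV₀
  have hSLT : ∀ β : Path x x, (∀ t, β t ∈ V) → ∀ α : Path x₀ x,
      ∃ lam : Path x₀ x₀, (∀ t, lam t ∈ U) ∧
        loopClass (α.trans (β.trans α.symm)) * (loopClass lam)⁻¹ ∈ H :=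
    fun β hβ α => hSLT₀ β (fun t => pathComponentIn_subset (hβ t)) α
  have inj : ∀ e₁ e₂ : E, p e₁ ∈ V → p e₂ = p e₁ → JoinedIn (p ⁻¹' V) e₁ e₂ → e₁ = e₂ :=
    fun e₁ e₂ h1 h2 h3 => key_inj hcont hp he hH hUlift hVpc hxV hSLT h1 h2 h3
  have hsurj : ∀ e, p e ∈ V → ∀ v ∈ V, ∃ e', p e' = v ∧ JoinedIn (p ⁻¹' V) e e' := by
    intro e hev v hv
    obtain ⟨γ, hγ⟩ := hVpc.joinedIn (p e) hev v hv
    refine ⟨hp.liftEnd γ e rfl, hp.liftEnd_proj rfl, ⟨hp.liftPath γ e rfl, fun t => ?_⟩⟩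
    show p _ ∈ V
    rw [hp.liftPath_proj rfl t]; exact hγ t
  have fiberex : ∀ e, p e ∈ V → ∃! f, p f = x ∧ JoinedIn (p ⁻¹' V) e f := by
    intro e hev
    obtain ⟨f, hf1, hf2⟩ := hsurj e hev x hxV
    refine ⟨f, ⟨hf1, hf2⟩, ?_⟩
    rintro f' ⟨hf'1, hf'2⟩
    exact inj f' f (by rw [hf'1]; exact hxV) (hf1.trans hf'1.symm) (hf'2.symm.trans hf2)
  have ptex : ∀ (f : E), p f = x → ∀ v ∈ V, ∃! e', p e' = v ∧ JoinedIn (p ⁻¹' V) f e' := by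
    intro f hf v hv
    obtain ⟨e', h1, h2⟩ := hsurj f (by rw [hf]; exact hxV) v hv
    refine ⟨e', ⟨h1, h2⟩, ?_⟩
    rintro e'' ⟨g1, g2⟩
    exact (inj e' e'' (by rw [h1]; exact hv) (g1.trans h1.symm) (h2.symm.trans g2)).symm
  set Fib : Set E := p ⁻¹' {x} with hFibdef
  have pfib : ∀ f : Fib, p f.1 = x := fun f => f.2
  have hfV : ∀ f : Fib, p f.1 ∈ V := fun f => by rw [pfib f]; exact hxV
  -- the section picking out the fiber point in the same component
  let s : E → Fib := fun e =>
    if h : p e ∈ V then ⟨(fiberex e h).exists.choose, ((fiberex e h).exists.choose_spec).1⟩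
    else ⟨fx, hfx⟩
  have s_spec : ∀ e (h : p e ∈ V), p (s e).1 = x ∧ JoinedIn (p ⁻¹' V) e (s e).1 := by
    intro e h
    simp only [s, dif_pos h]
    exact (fiberex e h).exists.choose_spec
  have s_unique : ∀ e (h : p e ∈ V) (f : E), p f = x → JoinedIn (p ⁻¹' V) e f →
      (s e).1 = f := by
    intro e h f h1 h2
    exact (fiberex e h).unique ⟨(s_spec e h).1, (s_spec e h).2⟩ ⟨h1, h2⟩
  -- the inverse function of the trivialization
  let ifn : X' × Fib → E := fun z =>
    if h : z.1 ∈ V then (ptex z.2.1 z.2.2 z.1 h).exists.choose else e₀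
  have ifn_spec : ∀ (z : X' × Fib) (h : z.1 ∈ V),
      p (ifn z) = z.1 ∧ JoinedIn (p ⁻¹' V) z.2.1 (ifn z) := by
    intro z h
    simp only [ifn, dif_pos h]
    exact (ptex z.2.1 z.2.2 z.1 h).exists.choose_spec
  have ifn_unique : ∀ (z : X' × Fib) (h : z.1 ∈ V) (e : E),
      p e = z.1 → JoinedIn (p ⁻¹' V) z.2.1 e → ifn z = e := by
    intro z h e h1 h2
    exact ((ptex z.2.1 z.2.2 z.1 h).unique ⟨(ifn_spec z h).1, (ifn_spec z h).2⟩ ⟨h1, h2⟩)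
  -- fibers are discrete
  haveI hdisc : DiscreteTopology Fib := by
    rw [discreteTopology_iff_isOpen_singleton]
    intro f
    have hset : (({f} : Set Fib)) = Subtype.val ⁻¹' (pathComponentIn (p ⁻¹' V) f.1) := by
      ext g
      simp only [Set.mem_preimage, Set.mem_singleton_iff]
      constructor
      · rintro rfl
        exact mem_pathComponentIn_self (hfV _)
      · intro hg
        exact Subtype.ext (inj f.1 g.1 (hfV f) (by rw [pfib g, pfib f]) hg).symm
    rw [hset]
    exact (((hVopen.preimage hcont).pathComponentIn _).preimage continuous_subtype_val)
  -- slices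
  have hSopen : ∀ f : Fib, IsOpen (pathComponentIn (p ⁻¹' V) f.1) :=
    fun f => (hVopen.preimage hcont).pathComponentIn _
  let m : ∀ f : Fib, pathComponentIn (p ⁻¹' V) f.1 → V :=
    fun f a => ⟨p a.1, Set.mem_preimage.mp (pathComponentIn_subset a.2)⟩
  have hmcont : ∀ f, Continuous (m f) :=
    fun f => (hcont.comp continuous_subtype_val).subtype_mk _
  have hmbij : ∀ f, Function.Bijective (m f) := by
    intro f
    constructor
    · rintro ⟨a₁, ha₁⟩ ⟨a₂, ha₂⟩ hq
      have hpa : p a₁ = p a₂ := congrArg Subtype.val hq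
      exact Subtype.ext (inj a₁ a₂ (Set.mem_preimage.mp (pathComponentIn_subset ha₁)) hpa.symm
        (ha₁.symm.trans ha₂))
    · rintro ⟨v, hv⟩
      obtain ⟨e', h1, h2⟩ := hsurj f.1 (hfV f) v hv
      exact ⟨⟨e', h2⟩, Subtype.ext h1⟩
  have hmopen : ∀ f, IsOpenMap (m f) := by
    intro f O hO
    obtain ⟨A, hA, hAeq⟩ := isOpen_induced_iff.mp hO
    have himg : m f '' O = Subtype.val ⁻¹' (p '' (A ∩ pathComponentIn (p ⁻¹' V) f.1)) := by
      ext v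
      simp only [Set.mem_image, Set.mem_preimage]
      constructor
      · rintro ⟨o, hoO, rfl⟩
        exact ⟨o.1, ⟨by rw [← hAeq] at hoO; exact hoO, o.2⟩, rfl⟩
      · rintro ⟨a, ⟨haA, haS⟩, hpa⟩
        refine ⟨⟨a, haS⟩, ?_, Subtype.ext hpa⟩
        rw [← hAeq]; exact haA
    rw [himg]
    exact (hp.isLocalHomeomorph.isOpenMap _ (hA.inter (hSopen f))).preimage
      continuous_subtype_val
  let hom : ∀ f : Fib, ↥(pathComponentIn (p ⁻¹' V) f.1) ≃ₜ ↥V := fun f =>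
    Equiv.toHomeomorphOfContinuousOpen (Equiv.ofBijective (m f) (hmbij f))
      (hmcont f) (hmopen f)
  let σf : ∀ _ : Fib, ↥V → E := fun f v => ((hom f).symm v).1
  have hσcont : ∀ f, Continuous (σf f) :=
    fun f => continuous_subtype_val.comp (hom f).symm.continuous
  have agree : ∀ (f : Fib) (v : ↥V), ifn (v.1, f) = σf f v := by
    intro f v
    refine ifn_unique (v.1, f) v.2 _ ?_ ?_
    · have : (hom f) ((hom f).symm v) = v := (hom f).apply_symm_apply v
      have := congrArg Subtype.val this
      exact this
    · exact ((hom f).symm v).2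
  have hifn_cont : ContinuousOn ifn (V ×ˢ (Set.univ : Set Fib)) := by
    intro z hz
    have hN : IsOpen (V ×ˢ ({z.2} : Set Fib)) := hVopen.prod (isOpen_discrete _)
    have hzN : z ∈ V ×ˢ ({z.2} : Set Fib) := ⟨hz.1, rfl⟩
    have hcN : ContinuousOn ifn (V ×ˢ ({z.2} : Set Fib)) := by
      rw [continuousOn_iff_continuous_domRestrict]
      have hres : (V ×ˢ ({z.2} : Set Fib)).domRestrict ifn =
          fun w : ↥(V ×ˢ ({z.2} : Set Fib)) => σf z.2 ⟨w.1.1, w.2.1⟩ := by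
        funext w
        have hw2 : w.1.2 = z.2 := w.2.2
        have hw1 : w.1 = (w.1.1, z.2) := Prod.ext rfl hw2
        show ifn w.1 = _
        exact (congrArg ifn hw1).trans (agree z.2 ⟨w.1.1, w.2.1⟩)
      rw [hres]
      exact (hσcont z.2).comp
        (Continuous.subtype_mk (continuous_fst.comp continuous_subtype_val) _)
    exact (hcN.continuousAt (hN.mem_nhds hzN)).continuousWithinAt
  have s_contOn : ContinuousOn s (p ⁻¹' V) := by
    intro e heV
    have hconst : ∀ e' ∈ pathComponentIn (p ⁻¹' V) e, s e' = s e := by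
      intro e' he'
      exact Subtype.ext (s_unique e' (Set.mem_preimage.mp (pathComponentIn_subset he')) (s e).1
        (s_spec e heV).1 (he'.symm.trans (s_spec e heV).2))
    have hev : s =ᶠ[𝓝 e] fun _ => s e := Filter.eventually_of_mem
      (((hVopen.preimage hcont).pathComponentIn e).mem_nhds
        (mem_pathComponentIn_self heV)) hconst
    exact hev.continuousAt.continuousWithinAt
  refine IsEvenlyCovered.of_trivialization (t := {
      toFun := fun e => (p e, s e)
      invFun := ifn
      source := p ⁻¹' V
      target := V ×ˢ (Set.univ : Set Fib)
      map_source' := fun e heV => ⟨heV, trivial⟩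
      map_target' := fun z hz => (ifn_spec z hz.1).2.target_mem
      left_inv' := fun e heV =>
        ifn_unique (p e, s e) heV e rfl (s_spec e heV).2.symm
      right_inv' := fun z hz => by
        have h1 := ifn_spec z hz.1
        have h2 : s (ifn z) = z.2 := Subtype.ext
          (s_unique (ifn z) (by rw [h1.1]; exact hz.1) z.2.1 z.2.2 h1.2.symm)
        exact Prod.ext h1.1 h2
      open_source := hVopen.preimage hcont
      open_target := hVopen.prod isOpen_univ
      continuousOn_toFun := hcont.continuousOn.prodMk s_contOn
      continuousOn_invFun := hifn_cont
      baseSet := V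
      open_baseSet := hVopen
      source_eq := rfl
      target_eq := rfl
      proj_toFun := fun e _ => rfl }) hxV


end
end

section
/- Let X be locally path connected and a strong H-SLT space at x₀, H ≤ π₁(X,x₀). Then H is open in the whisker topology on π₁(X,x₀) if and only if H is open in the lasso topology on π₁(X,x₀). -/
open CategoryTheory unitInterval
open scoped Topology

attribute [local instance] Path.Homotopic.setoid

noncomputable section

variable {X : Type*} [TopologicalSpace X]

/-- The whisker topology on the fundamental group at `x₀`: the subspace topology inherited
from the whisker topology on the universal path space. -/
def whiskerPi1 (x₀ : X) : TopologicalSpace (FundamentalGroup X x₀) :=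
  TopologicalSpace.generateFrom
    {S | ∃ (x : X) (α : Path x₀ x) (U : Set X), IsOpen U ∧ x ∈ U ∧
      S = {g | ∃ lam : Path x x₀, (∀ t, lam t ∈ U) ∧ g = loopClass (α.trans lam)}}

/-- The lasso topology on the fundamental group at `x₀`: the subspace topology inherited
from the lasso topology on the universal path space. -/
def lassoPi1 (x₀ : X) : TopologicalSpace (FundamentalGroup X x₀) :=
  TopologicalSpace.generateFrom
    {S | ∃ (x : X) (α : Path x₀ x) (𝒰 : Set (Set X)) (U : Set X),
      IsOpenCover 𝒰 ∧ U ∈ 𝒰 ∧ x ∈ U ∧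
      S = {g | ∃ (γ : Path x x) (δ : Path x x₀), loopClass γ ∈ spanierGroupAt x 𝒰 ∧
            (∀ t, δ t ∈ U) ∧ g = loopClass ((α.trans γ).trans δ)}}

/-! ### Auxiliary lemmas -/

section Aux

variable {x₀ : X}

/-- Homotopy class of a path as a morphism of the fundamental groupoid. -/
def hq {a b : X} (p : Path a b) : FundamentalGroupoid.mk a ⟶ FundamentalGroupoid.mk b := ⟦p⟧

lemma hq_trans {a b c : X} (p : Path a b) (q : Path b c) : hq (p.trans q) = hq p ≫ hq q :=
  Path.Homotopic.Quotient.mk_trans p q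

lemma hq_symm {a b : X} (p : Path a b) : hq p.symm = inv (hq p) := by
  rw [← Groupoid.inv_eq_inv]; rfl

lemma hq_refl (a : X) : hq (Path.refl a) = 𝟙 (FundamentalGroupoid.mk a) := rfl

lemma loopClass_hom_s12 (γ : Path x₀ x₀) : FundamentalGroup.toArrow (loopClass γ) = hq γ := rfl

lemma mul_hom (a b : FundamentalGroup X x₀) : FundamentalGroup.toArrow (a * b) = FundamentalGroup.toArrow b ≫ FundamentalGroup.toArrow a := rfl

lemma loopClass_refl_one : loopClass (Path.refl x₀) = (1 : FundamentalGroup X x₀) :=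
  rfl

lemma loopClass_trans_loop (p μ : Path x₀ x₀) :
    loopClass (p.trans μ) = loopClass μ * loopClass p := by
  show FundamentalGroup.toArrow _ = FundamentalGroup.toArrow _; simp [mul_hom, loopClass_hom_s12, hq_trans]

lemma loopClass_reassoc₁ {x : X} (α : Path x₀ x) (lam : Path x x₀) (μ : Path x₀ x₀) :
    loopClass ((α.trans lam).trans μ) = loopClass (α.trans (lam.trans μ)) := by
  show FundamentalGroup.toArrow _ = FundamentalGroup.toArrow _; simp [loopClass_hom_s12, hq_trans]

lemma loopClass_conj {y z : X} (a : Path x₀ y) (β : Path y y) (p : Path z y) :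
    loopClass ((a.trans p.symm).trans
      ((p.trans (β.trans p.symm)).trans (a.trans p.symm).symm)) =
    loopClass (a.trans (β.trans a.symm)) := by
  show FundamentalGroup.toArrow _ = FundamentalGroup.toArrow _; simp [loopClass_hom_s12, hq_trans, hq_symm]

lemma loopClass_refl_conj {x : X} (β : Path x x) :
    loopClass ((Path.refl x).trans (β.trans (Path.refl x).symm)) = loopClass β := by
  show FundamentalGroup.toArrow _ = FundamentalGroup.toArrow _; simp [loopClass_hom_s12, hq_trans, hq_symm, hq_refl]

lemma trans_mem {a b c : X} {U : Set X} {p : Path a b} {q : Path b c}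
    (hp : ∀ t, p t ∈ U) (hq : ∀ t, q t ∈ U) : ∀ t, (p.trans q) t ∈ U := by
  intro t; rw [Path.trans_apply]; split_ifs; exacts [hp _, hq _]

lemma symm_mem {a b : X} {U : Set X} {p : Path a b} (hp : ∀ t, p t ∈ U) :
    ∀ t, p.symm t ∈ U := fun t => hp (σ t)

lemma exists_rep (g : FundamentalGroup X x₀) : ∃ γ : Path x₀ x₀, g = loopClass γ := by
  obtain ⟨γ, hγ⟩ := Quotient.exists_rep (FundamentalGroup.toPath g)
  exact ⟨γ, hγ.symm⟩

/-- A whisker basic set. -/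
def whiskerBasic {x : X} (α : Path x₀ x) (U : Set X) : Set (FundamentalGroup X x₀) :=
  {g | ∃ lam : Path x x₀, (∀ t, lam t ∈ U) ∧ g = loopClass (α.trans lam)}

/-- The generating family of the whisker topology. -/
def whiskerGens (x₀ : X) : Set (Set (FundamentalGroup X x₀)) :=
  {S | ∃ (x : X) (α : Path x₀ x) (U : Set X), IsOpen U ∧ x ∈ U ∧ S = whiskerBasic α U}

lemma whiskerPi1_eq (x₀ : X) :
    whiskerPi1 x₀ = TopologicalSpace.generateFrom (whiskerGens x₀) := rfl

lemma generateOpen_of_nhds {G : Type*} {gens : Set (Set G)} {S : Set G}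
    (h : ∀ g ∈ S, ∃ B ∈ gens, g ∈ B ∧ B ⊆ S) : TopologicalSpace.GenerateOpen gens S := by
  have hS : S = ⋃₀ {B | B ∈ gens ∧ B ⊆ S} := by
    apply subset_antisymm
    · intro g hg
      obtain ⟨B, h1, h2, h3⟩ := h g hg
      exact ⟨B, ⟨h1, h3⟩, h2⟩
    · rintro g ⟨B, ⟨_, h3⟩, hg⟩
      exact h3 hg
  rw [hS]
  exact .sUnion _ fun B hB => .basic B hB.1

/-- In the whisker topology, every point of an open set has a basic neighborhood inside it. -/
lemma exists_basic_whisker {S : Set (FundamentalGroup X x₀)}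
    (hS : TopologicalSpace.GenerateOpen (whiskerGens x₀) S) :
    ∀ g ∈ S, ∃ (x : X) (α : Path x₀ x) (U : Set X), IsOpen U ∧ x ∈ U ∧
      g ∈ whiskerBasic α U ∧ whiskerBasic α U ⊆ S := by
  induction hS with
  | basic s hs =>
    obtain ⟨x, α, U, hU, hxU, rfl⟩ := hs
    exact fun g hg => ⟨x, α, U, hU, hxU, hg, subset_rfl⟩
  | univ =>
    intro g _
    obtain ⟨γ, rfl⟩ := exists_rep g
    refine ⟨x₀, γ, Set.univ, isOpen_univ, trivial,
      ⟨Path.refl x₀, fun t => trivial, ?_⟩, Set.subset_univ _⟩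
    rw [loopClass_trans_loop, loopClass_refl_one, one_mul]
  | inter s t _ _ ihs iht =>
    intro g hg
    obtain ⟨x, α, U, hU, hxU, ⟨lam, hlam, hg1⟩, hsub1⟩ := ihs g hg.1
    obtain ⟨x', α', U', hU', hxU', ⟨lam', hlam', hg2⟩, hsub2⟩ := iht g hg.2
    have hx₀U : x₀ ∈ U := by have := hlam 1; rwa [lam.target] at this
    have hx₀U' : x₀ ∈ U' := by have := hlam' 1; rwa [lam'.target] at this
    refine ⟨x₀, α.trans lam, U ∩ U', hU.inter hU', ⟨hx₀U, hx₀U'⟩, ?_, ?_⟩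
    · exact ⟨Path.refl x₀, fun t => ⟨hx₀U, hx₀U'⟩, by
        rw [loopClass_trans_loop, loopClass_refl_one, one_mul, hg1]⟩
    · rintro g' ⟨μ, hμ, rfl⟩
      constructor
      · apply hsub1
        exact ⟨lam.trans μ, trans_mem hlam (fun t => (hμ t).1),
          loopClass_reassoc₁ α lam μ⟩
      · apply hsub2
        refine ⟨lam'.trans μ, trans_mem hlam' (fun t => (hμ t).2), ?_⟩
        rw [← loopClass_reassoc₁, loopClass_trans_loop, ← hg1, hg2, ← loopClass_trans_loop]
  | sUnion 𝔖 _ ih =>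
    rintro g ⟨s, hs, hgs⟩
    obtain ⟨x, α, U, h1, h2, h3, h4⟩ := ih s hs g hgs
    exact ⟨x, α, U, h1, h2, h3, h4.trans (Set.subset_sUnion_of_mem hs)⟩

end Aux

theorem whisker_open_iff_lasso_open [LocallyPathConnectedSpace X]
    (x₀ : X) (H : Subgroup (FundamentalGroup X x₀)) (hSLT : StrongHSLTAt x₀ H) :
    IsOpen[whiskerPi1 x₀] (H : Set (FundamentalGroup X x₀)) ↔
      IsOpen[lassoPi1 x₀] (H : Set (FundamentalGroup X x₀)) := by
  constructor
  · -- hard direction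
    intro hw
    have hw' : TopologicalSpace.GenerateOpen (whiskerGens x₀) (H : Set (FundamentalGroup X x₀)) :=
      hw
    obtain ⟨x, α, U, hUopen, hxU, ⟨lam₀, hlam₀, h1eq⟩, hBsub⟩ :=
      exists_basic_whisker hw' 1 (one_mem H)
    have hx₀U : x₀ ∈ U := by have := hlam₀ 1; rwa [lam₀.target] at this
    -- loops in U are in H
    have hloopU : ∀ μ : Path x₀ x₀, (∀ t, μ t ∈ U) → loopClass μ ∈ H := by
      intro μ hμ
      have hmem : loopClass (α.trans (lam₀.trans μ)) ∈ (H : Set (FundamentalGroup X x₀)) :=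
        hBsub ⟨lam₀.trans μ, trans_mem hlam₀ hμ, rfl⟩
      rwa [← loopClass_reassoc₁, loopClass_trans_loop, ← h1eq, mul_one] at hmem
    -- cover from strong H-SLT
    choose V hVopen hVmem hVprop using fun x' => hSLT x' U hUopen hx₀U
    set 𝒰 : Set (Set X) := Set.range (fun x' => pathComponentIn (V x') x') with h𝒰
    have hcover : IsOpenCover 𝒰 := by
      constructor
      · rintro W ⟨x', rfl⟩
        exact (hVopen x').pathComponentIn x'
      · apply Set.eq_univ_of_forall
        intro y
        exact ⟨pathComponentIn (V y) y, ⟨y, rfl⟩, mem_pathComponentIn_self (hVmem y)⟩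
    -- the Spanier group of 𝒰 is contained in H
    have hSpan : spanierGroupAt x₀ 𝒰 ≤ H := by
      rw [spanierGroupAt, Subgroup.closure_le]
      rintro g ⟨y, a, β, W, ⟨z, rfl⟩, hβ, rfl⟩
      have hy : y ∈ pathComponentIn (V z) z := by
        have := hβ 0; rwa [β.source] at this
      have hJ : JoinedIn (V z) z y := hy
      obtain ⟨p, hp⟩ := hJ
      have hβV : ∀ t, β t ∈ V z := fun t => pathComponentIn_subset (hβ t)
      have hβ' : ∀ t, (p.trans (β.trans p.symm)) t ∈ V z :=
        trans_mem hp (trans_mem hβV (symm_mem hp))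
      obtain ⟨lam, hlamU, hHmem⟩ := hVprop z (p.trans (β.trans p.symm)) hβ' (a.trans p.symm)
      have hlamH : loopClass lam ∈ H := hloopU lam hlamU
      have : loopClass ((a.trans p.symm).trans
          ((p.trans (β.trans p.symm)).trans (a.trans p.symm).symm)) ∈ H := by
        have := H.mul_mem hHmem hlamH
        simpa only [inv_mul_cancel_right] using this
      rwa [loopClass_conj] at this
    -- H is lasso-open
    show TopologicalSpace.GenerateOpen _ (H : Set (FundamentalGroup X x₀))
    apply generateOpen_of_nhds
    intro h hH
    obtain ⟨γ₀, rfl⟩ := exists_rep h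
    set U₀ := pathComponentIn (V x₀) x₀ with hU₀
    have hU₀𝒰 : U₀ ∈ 𝒰 := ⟨x₀, rfl⟩
    have hx₀U₀ : x₀ ∈ U₀ := mem_pathComponentIn_self (hVmem x₀)
    refine ⟨_, ⟨x₀, γ₀, 𝒰, U₀, hcover, hU₀𝒰, hx₀U₀, rfl⟩, ?_, ?_⟩
    · refine ⟨Path.refl x₀, Path.refl x₀, ?_, fun t => hx₀U₀, ?_⟩
      · rw [loopClass_refl_one]; exact one_mem _
      · rw [loopClass_trans_loop, loopClass_refl_one, one_mul,
          loopClass_trans_loop, loopClass_refl_one, one_mul]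
    · rintro g ⟨γ, δ, hγSpan, hδ, rfl⟩
      have hδH : loopClass δ ∈ H := by
        apply hSpan
        apply Subgroup.subset_closure
        exact ⟨x₀, Path.refl x₀, δ, U₀, hU₀𝒰, hδ, (loopClass_refl_conj δ).symm⟩
      have hγH : loopClass γ ∈ H := hSpan hγSpan
      have : loopClass ((γ₀.trans γ).trans δ) =
          loopClass δ * (loopClass γ * loopClass γ₀) := by
        rw [loopClass_trans_loop, loopClass_trans_loop]
      rw [this]
      exact H.mul_mem hδH (H.mul_mem hγH hH)
  · -- easy direction: the whisker topology is finer
    intro hl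
    have hle : whiskerPi1 x₀ ≤ lassoPi1 x₀ := by
      apply le_generateFrom
      rintro S ⟨x, α, 𝒰, U, hcover, hU𝒰, hxU, rfl⟩
      show TopologicalSpace.GenerateOpen _ _
      apply generateOpen_of_nhds
      rintro g ⟨γ, δ, hγSpan, hδ, rfl⟩
      refine ⟨whiskerBasic (α.trans γ) U, ⟨x, α.trans γ, U, hcover.1 U hU𝒰, hxU, rfl⟩,
        ⟨δ, hδ, rfl⟩, ?_⟩
      rintro g' ⟨lam, hlam, rfl⟩
      refine ⟨γ.trans (lam.trans δ.symm), δ, ?_, hδ, ?_⟩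
      · rw [loopClass_trans_loop]
        refine Subgroup.mul_mem _ ?_ hγSpan
        apply Subgroup.subset_closure
        exact ⟨x, Path.refl x, lam.trans δ.symm, U, hU𝒰, trans_mem hlam (symm_mem hδ),
          (loopClass_refl_conj _).symm⟩
      · show FundamentalGroup.toArrow _ = FundamentalGroup.toArrow _
        simp [loopClass_hom_s12, hq_trans, hq_symm]
    rw [TopologicalSpace.le_def] at hle
    exact hle _ hl

end
end

section
/- Let X be path connected and H a normal subgroup of π₁(X,x₀). The fiber p_H⁻¹(x₀) = π₁(X,x₀)/H with the subspace lasso topology is Hausdorff if and only if H is closed in π₁^{l}(X,x₀). -/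
open CategoryTheory unitInterval
open scoped Topology

attribute [local instance] Path.Homotopic.setoid

noncomputable section

variable {X : Type*} [TopologicalSpace X]

/-- The relation on paths from `x₀`: `α ∼ β` iff they share the endpoint and
`[α∗β⁻¹] ∈ K`. -/
def hrel {x₀ : X} (K : Subgroup (FundamentalGroup X x₀)) :
    (Σ y : X, Path x₀ y) → (Σ y : X, Path x₀ y) → Prop :=
  fun a b => ∃ h : a.1 = b.1, loopClass (a.2.trans ((b.2.cast rfl h).symm)) ∈ K

/-- The set `X̃_K` of `K`-classes of paths emanating from `x₀`. -/
def Xtilde (x₀ : X) (K : Subgroup (FundamentalGroup X x₀)) := Quot (hrel K)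

/-- The whisker topology on `X̃_K`, with basic open sets `B_K([α], U)`. -/
def whiskerTop (x₀ : X) (K : Subgroup (FundamentalGroup X x₀)) :
    TopologicalSpace (Xtilde x₀ K) :=
  TopologicalSpace.generateFrom
    {S | ∃ (y : X) (α : Path x₀ y) (U : Set X), IsOpen U ∧ y ∈ U ∧
      S = {q | ∃ (z : X) (lam : Path y z), (∀ t, lam t ∈ U) ∧
            q = Quot.mk _ ⟨z, α.trans lam⟩}}

/-- The lasso topology on `X̃_K`, with basic open sets `B_K([α], 𝒰, U)`. -/
def lassoTop (x₀ : X) (K : Subgroup (FundamentalGroup X x₀)) :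
    TopologicalSpace (Xtilde x₀ K) :=
  TopologicalSpace.generateFrom
    {S | ∃ (y : X) (α : Path x₀ y) (𝒰 : Set (Set X)) (U : Set X),
      IsOpenCover 𝒰 ∧ U ∈ 𝒰 ∧ y ∈ U ∧
      S = {q | ∃ (γ : Path y y) (z : X) (δ : Path y z),
            loopClass γ ∈ spanierGroupAt y 𝒰 ∧ (∀ t, δ t ∈ U) ∧
            q = Quot.mk _ ⟨z, (α.trans γ).trans δ⟩}}

/-- The endpoint projection `p_K : X̃_K → X`, `[α]_K ↦ α(1)`. -/
def endpointMap (x₀ : X) (K : Subgroup (FundamentalGroup X x₀)) : Xtilde x₀ K → X :=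
  Quot.lift Sigma.fst (fun _ _ h => h.1)

namespace LassoAux

open TopologicalSpace

variable {X : Type*} [TopologicalSpace X]

/-- The homotopy class of a path as a morphism in the fundamental groupoid. -/
abbrev hQ {a b : X} (p : Path a b) : FundamentalGroupoid.mk a ⟶ FundamentalGroupoid.mk b := ⟦p⟧

@[simp] lemma hQ_trans {a b c : X} (p : Path a b) (q : Path b c) :
    hQ (p.trans q) = hQ p ≫ hQ q := rfl

@[simp] lemma hQ_symm {a b : X} (p : Path a b) :
    hQ p.symm = CategoryTheory.inv (hQ p) := by
  symm; rw [← CategoryTheory.Groupoid.inv_eq_inv]; rfl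

@[simp] lemma hQ_refl (a : X) : hQ (Path.refl a) = 𝟙 (FundamentalGroupoid.mk a) := rfl

/-- An element of the fundamental group as a morphism. -/
def fgHom {x : X} (a : FundamentalGroup X x) :
    FundamentalGroupoid.mk x ⟶ FundamentalGroupoid.mk x := a

@[simp] lemma comp_q {a b c : FundamentalGroupoid X} (p : a ⟶ b) (q : b ⟶ c) :
    p ≫ q = Path.Homotopic.Quotient.trans p q := rfl

@[simp] lemma id_q (a : FundamentalGroupoid X) : 𝟙 a = Path.Homotopic.Quotient.refl a.as := rfl

@[simp] lemma inv_q {a b : FundamentalGroupoid X} (p : a ⟶ b) :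
    CategoryTheory.inv p = Path.Homotopic.Quotient.symm p := by
  rw [← CategoryTheory.Groupoid.inv_eq_inv]
  induction p using Quotient.ind
  rfl

@[simp] lemma q_trans_symm_trans {a b c : X} (p : Path.Homotopic.Quotient a b)
    (q : Path.Homotopic.Quotient a c) : p.trans (p.symm.trans q) = q := by
  rw [← Path.Homotopic.Quotient.trans_assoc]; simp

@[simp] lemma q_symm_trans_trans {a b c : X} (p : Path.Homotopic.Quotient a b)
    (q : Path.Homotopic.Quotient b c) : p.symm.trans (p.trans q) = q := by
  rw [← Path.Homotopic.Quotient.trans_assoc]; simp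

lemma fg_ext {x : X} {a b : FundamentalGroup X x} (h : fgHom a = fgHom b) : a = b := h

@[simp] lemma loopClass_hom {x : X} (γ : Path x x) : fgHom (loopClass γ) = Path.Homotopic.Quotient.mk γ := rfl

@[simp] lemma mul_hom {x : X} (a b : FundamentalGroup X x) : fgHom (a * b) = (fgHom b).trans (fgHom a) := rfl

@[simp] lemma comp_hom {x : X} (a b : FundamentalGroup X x) :
    fgHom (a ≫ b) = (fgHom a).trans (fgHom b) := rfl

@[simp] lemma inv_hom {x : X} (a : FundamentalGroup X x) :
    fgHom (a⁻¹) = (fgHom a).symm := by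
  rw [← inv_q]; symm; exact IsIso.inv_eq_of_hom_inv_id (inv_mul_cancel a)

@[simp] lemma one_hom {x : X} : fgHom (1 : FundamentalGroup X x) = Path.Homotopic.Quotient.refl x := rfl

@[simp] lemma id_hom {x : X} :
    fgHom (𝟙 (FundamentalGroupoid.mk x)) = Path.Homotopic.Quotient.refl x := rfl

@[simp] lemma path_cast_self {a b : X} (p : Path a b) (h₁ : a = a) (h₂ : b = b) :
    p.cast h₁ h₂ = p := rfl

lemma loopClass_surj {x : X} (g : FundamentalGroup X x) : ∃ γ : Path x x, loopClass γ = g := by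
  obtain ⟨γ, h⟩ := Quotient.exists_rep (fgHom g : Path.Homotopic.Quotient x x)
  exact ⟨γ, fg_ext h⟩

/-- Conjugation of the fundamental group along a path. -/
def cjf {x y : X} (α : Path x y) (g : FundamentalGroup X y) : FundamentalGroup X x :=
  (hQ α ≫ fgHom g ≫ CategoryTheory.inv (hQ α) : FundamentalGroupoid.mk x ⟶ FundamentalGroupoid.mk x)

@[simp] lemma cjf_hom {x y : X} (α : Path x y) (g : FundamentalGroup X y) :
    fgHom (cjf α g) = (Path.Homotopic.Quotient.mk α).trans
      ((fgHom g).trans (Path.Homotopic.Quotient.mk α).symm) := by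
  simp [cjf, fgHom]

@[simp] lemma q_symm_symm {a b : X} (p : Path.Homotopic.Quotient a b) : p.symm.symm = p := by
  induction p using Quotient.ind
  exact congrArg _ (Path.symm_symm _)

@[simp] lemma q_symm_trans {a b c : X} (p : Path.Homotopic.Quotient a b)
    (q : Path.Homotopic.Quotient b c) : (p.trans q).symm = q.symm.trans p.symm := by
  induction p using Quotient.ind
  induction q using Quotient.ind
  exact congrArg _ (Path.trans_symm _ _)

@[simp] lemma loopClass_q {x : X} (γ : Path x x) :
    loopClass γ = (Path.Homotopic.Quotient.mk γ : FundamentalGroup X x) := rfl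

@[simp] lemma fgHom_q {x : X} (a : FundamentalGroup X x) :
    fgHom a = (a : Path.Homotopic.Quotient x x) := rfl

@[simp] lemma inv_fg {x : X} (a : FundamentalGroup X x) :
    a⁻¹ = (Path.Homotopic.Quotient.symm (a : Path.Homotopic.Quotient x x) : FundamentalGroup X x) := by
  have := inv_hom a
  exact this

@[simp] lemma mul_fg {x : X} (a b : FundamentalGroup X x) :
    a * b = (Path.Homotopic.Quotient.trans (b : Path.Homotopic.Quotient x x) a :
      FundamentalGroup X x) := rfl

@[simp] lemma one_fg {x : X} :
    (1 : FundamentalGroup X x) = (Path.Homotopic.Quotient.refl x : FundamentalGroup X x) := rfl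

@[simp] lemma cjf_q {x y : X} (α : Path x y) (g : FundamentalGroup X y) :
    cjf α g = ((Path.Homotopic.Quotient.mk α).trans
      ((g : Path.Homotopic.Quotient y y).trans (Path.Homotopic.Quotient.mk α).symm) :
        FundamentalGroup X x) := cjf_hom α g

/-- Conjugation along a path as a group homomorphism. -/
def cjHom {x y : X} (α : Path x y) : FundamentalGroup X y →* FundamentalGroup X x :=
  MonoidHom.mk' (cjf α) (fun a b => fg_ext (by simp))

@[simp] lemma cjHom_apply {x y : X} (α : Path x y) (g : FundamentalGroup X y) :
    cjHom α g = cjf α g := rfl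

lemma cjf_spanier {x y : X} (α : Path x y) {𝒰 : Set (Set X)} {g : FundamentalGroup X y}
    (hg : g ∈ spanierGroupAt y 𝒰) : cjf α g ∈ spanierGroupAt x 𝒰 := by
  have hle : (spanierGroupAt y 𝒰).map (cjHom α) ≤ spanierGroupAt x 𝒰 := by
    rw [spanierGroupAt, MonoidHom.map_closure]
    refine (Subgroup.closure_le _).mpr ?_
    rintro _ ⟨g, ⟨z, a, b, U, hU, hb, rfl⟩, rfl⟩
    exact Subgroup.subset_closure
      ⟨z, α.trans a, b, U, hU, hb, fg_ext (by simp)⟩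
  exact hle ⟨g, hg, rfl⟩

lemma spanier_normal (x : X) (𝒰 : Set (Set X)) : (spanierGroupAt x 𝒰).Normal := by
  constructor
  intro n hn g
  obtain ⟨γ, rfl⟩ := loopClass_surj g
  have h : loopClass γ * n * (loopClass γ)⁻¹ = cjf γ.symm n := fg_ext (by simp)
  rw [h]; exact cjf_spanier _ hn

lemma loop_mem_spanier {x : X} {𝒰 : Set (Set X)} {U : Set X} (hU : U ∈ 𝒰)
    (δ : Path x x) (hδ : ∀ t, δ t ∈ U) : loopClass δ ∈ spanierGroupAt x 𝒰 :=
  Subgroup.subset_closure ⟨x, Path.refl x, δ, U, hU, hδ, fg_ext (by simp)⟩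

lemma mem_cover {𝒰 : Set (Set X)} (h : IsOpenCover 𝒰) (x : X) : ∃ U ∈ 𝒰, x ∈ U := by
  have hx : x ∈ ⋃₀ 𝒰 := h.2.symm ▸ Set.mem_univ x
  exact hx

lemma univ_cover : IsOpenCover ({Set.univ} : Set (Set X)) := by
  constructor
  · rintro U rfl; exact isOpen_univ
  · simp

lemma spanier_mono {x : X} {𝒰 𝒱 : Set (Set X)}
    (h : ∀ U ∈ 𝒰, ∃ V ∈ 𝒱, U ⊆ V) : spanierGroupAt x 𝒰 ≤ spanierGroupAt x 𝒱 := by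
  refine (Subgroup.closure_le _).mpr ?_
  rintro g ⟨z, a, b, U, hU, hb, rfl⟩
  obtain ⟨V, hV, hUV⟩ := h U hU
  exact Subgroup.subset_closure ⟨z, a, b, V, hV, fun t => hUV (hb t), rfl⟩

lemma cover_inter {𝒰₁ 𝒰₂ : Set (Set X)} (h₁ : IsOpenCover 𝒰₁) (h₂ : IsOpenCover 𝒰₂) :
    ∃ 𝒰 : Set (Set X), IsOpenCover 𝒰 ∧ (∀ x : X, spanierGroupAt x 𝒰 ≤ spanierGroupAt x 𝒰₁) ∧
      (∀ x : X, spanierGroupAt x 𝒰 ≤ spanierGroupAt x 𝒰₂) := by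
  refine ⟨Set.image2 (· ∩ ·) 𝒰₁ 𝒰₂, ⟨?_, ?_⟩, ?_, ?_⟩
  · rintro _ ⟨U₁, hU₁, U₂, hU₂, rfl⟩
    exact (h₁.1 U₁ hU₁).inter (h₂.1 U₂ hU₂)
  · apply Set.eq_univ_of_forall
    intro x
    obtain ⟨U₁, hU₁, hx₁⟩ := mem_cover h₁ x
    obtain ⟨U₂, hU₂, hx₂⟩ := mem_cover h₂ x
    exact ⟨U₁ ∩ U₂, ⟨U₁, hU₁, U₂, hU₂, rfl⟩, hx₁, hx₂⟩
  · intro x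
    apply spanier_mono
    rintro _ ⟨U₁, hU₁, U₂, hU₂, rfl⟩
    exact ⟨U₁, hU₁, Set.inter_subset_left⟩
  · intro x
    apply spanier_mono
    rintro _ ⟨U₁, hU₁, U₂, hU₂, rfl⟩
    exact ⟨U₂, hU₂, Set.inter_subset_right⟩

section Fiber

variable (x₀ : X) (H : Subgroup (FundamentalGroup X x₀))

lemma hrel_iff (p q : Path x₀ x₀) :
    hrel H ⟨x₀, p⟩ ⟨x₀, q⟩ ↔ loopClass (p.trans q.symm) ∈ H :=
  ⟨fun ⟨_, m⟩ => m, fun m => ⟨rfl, m⟩⟩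

lemma hrel_equiv : Equivalence (hrel H) := by
  constructor
  · rintro ⟨y, p⟩
    refine ⟨rfl, ?_⟩
    have h1 : loopClass (p.trans ((p.cast rfl rfl).symm)) = 1 := fg_ext (by simp)
    rw [h1]; exact one_mem H
  · rintro ⟨ya, pa⟩ ⟨yb, pb⟩ ⟨h, m⟩
    dsimp only at h
    subst h
    refine ⟨rfl, ?_⟩
    rw [path_cast_self] at m ⊢
    have h1 : loopClass (pb.trans pa.symm) = (loopClass (pa.trans pb.symm))⁻¹ :=
      fg_ext (by simp)
    rw [h1]; exact inv_mem m
  · rintro ⟨ya, pa⟩ ⟨yb, pb⟩ ⟨yc, pc⟩ ⟨h, m⟩ ⟨h', m'⟩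
    dsimp only at h h'
    subst h; subst h'
    refine ⟨rfl, ?_⟩
    rw [path_cast_self] at m m' ⊢
    have h1 : loopClass (pa.trans pc.symm) =
        loopClass (pb.trans pc.symm) * loopClass (pa.trans pb.symm) :=
      fg_ext (by simp)
    rw [h1]; exact mul_mem m' m

lemma quot_eq_iff (a b : Σ y : X, Path x₀ y) :
    Quot.mk (hrel H) a = Quot.mk (hrel H) b ↔ hrel H a b := by
  rw [Quot.eq]
  exact Equivalence.eqvGen_iff (hrel_equiv x₀ H)

/-- The canonical map from loops at `x₀` to the fiber of the endpoint projection. -/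
def φ (p : Path x₀ x₀) : {q : Xtilde x₀ H // endpointMap x₀ H q = x₀} :=
  ⟨Quot.mk _ ⟨x₀, p⟩, rfl⟩

lemma φ_eq_iff (p q : Path x₀ x₀) :
    φ x₀ H p = φ x₀ H q ↔ loopClass (p.trans q.symm) ∈ H := by
  rw [Subtype.ext_iff]
  exact (quot_eq_iff x₀ H _ _).trans (hrel_iff x₀ H p q)

lemma fib_surj (q : {q : Xtilde x₀ H // endpointMap x₀ H q = x₀}) :
    ∃ p : Path x₀ x₀, φ x₀ H p = q := by
  obtain ⟨q, hq⟩ := q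
  obtain ⟨⟨z, α⟩, rfl⟩ := Quot.exists_rep q
  have hz : z = x₀ := hq
  subst hz
  exact ⟨α, Subtype.ext rfl⟩

end Fiber
section Char

lemma pi1_open_forward {x₀ : X} {O : Set (FundamentalGroup X x₀)}
    (hO : IsOpen[lassoPi1 x₀] O) :
    ∀ g ∈ O, ∃ 𝒰 : Set (Set X), IsOpenCover 𝒰 ∧ ∀ c ∈ spanierGroupAt x₀ 𝒰, c * g ∈ O := by
  have hO' : TopologicalSpace.GenerateOpen
      {S | ∃ (x : X) (α : Path x₀ x) (𝒰 : Set (Set X)) (U : Set X),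
        IsOpenCover 𝒰 ∧ U ∈ 𝒰 ∧ x ∈ U ∧
        S = {g | ∃ (γ : Path x x) (δ : Path x x₀), loopClass γ ∈ spanierGroupAt x 𝒰 ∧
              (∀ t, δ t ∈ U) ∧ g = loopClass ((α.trans γ).trans δ)}} O := hO
  clear hO
  induction hO' with
  | @basic S hS =>
    intro g hg
    obtain ⟨x, α, 𝒰, U, hcov, hU, hxU, rfl⟩ := hS
    obtain ⟨γ₀, δ₀, hγ₀, hδ₀, rfl⟩ := hg
    refine ⟨𝒰, hcov, ?_⟩
    intro c hc
    obtain ⟨γc, rfl⟩ := loopClass_surj c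
    refine ⟨γ₀.trans ((δ₀.trans γc).trans δ₀.symm), δ₀, ?_, hδ₀, ?_⟩
    · have h1 : loopClass (γ₀.trans ((δ₀.trans γc).trans δ₀.symm)) =
          cjf δ₀ (loopClass γc) * loopClass γ₀ := fg_ext (by simp)
      rw [h1]; exact mul_mem (cjf_spanier δ₀ hc) hγ₀
    · exact fg_ext (by simp)
  | univ => exact fun g _ => ⟨{Set.univ}, univ_cover, fun c _ => trivial⟩
  | inter O₁ O₂ h₁ h₂ ih₁ ih₂ =>
    intro g hg
    obtain ⟨𝒰₁, hc₁, hp₁⟩ := ih₁ g hg.1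
    obtain ⟨𝒰₂, hc₂, hp₂⟩ := ih₂ g hg.2
    obtain ⟨𝒰, hc, hle₁, hle₂⟩ := cover_inter hc₁ hc₂
    exact ⟨𝒰, hc, fun c hc' => ⟨hp₁ c (hle₁ x₀ hc'), hp₂ c (hle₂ x₀ hc')⟩⟩
  | sUnion S hS ih =>
    intro g hg
    obtain ⟨O, hO, hgO⟩ := hg
    obtain ⟨𝒰, hc, hp⟩ := ih O hO g hgO
    exact ⟨𝒰, hc, fun c hc' => ⟨O, hO, hp c hc'⟩⟩

lemma pi1_open_reverse {x₀ : X} {O : Set (FundamentalGroup X x₀)}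
    (h : ∀ g ∈ O, ∃ 𝒰 : Set (Set X), IsOpenCover 𝒰 ∧ ∀ c ∈ spanierGroupAt x₀ 𝒰, c * g ∈ O) :
    IsOpen[lassoPi1 x₀] O := by
  letI := lassoPi1 x₀
  rw [isOpen_iff_forall_mem_open]
  intro g hg
  obtain ⟨𝒰, hcov, hp⟩ := h g hg
  obtain ⟨U, hU, hx₀U⟩ := mem_cover hcov x₀
  obtain ⟨p, rfl⟩ := loopClass_surj g
  refine ⟨{g' | ∃ (γ : Path x₀ x₀) (δ : Path x₀ x₀), loopClass γ ∈ spanierGroupAt x₀ 𝒰 ∧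
      (∀ t, δ t ∈ U) ∧ g' = loopClass ((p.trans γ).trans δ)}, ?_, ?_, ?_⟩
  · rintro g' ⟨γ, δ, hγ, hδ, rfl⟩
    have h1 : loopClass ((p.trans γ).trans δ) =
        (loopClass δ * loopClass γ) * loopClass p := fg_ext (by simp)
    rw [h1]
    exact hp _ (mul_mem (loop_mem_spanier hU δ hδ) hγ)
  · exact TopologicalSpace.isOpen_generateFrom_of_mem ⟨x₀, p, 𝒰, U, hcov, hU, hx₀U, rfl⟩
  · refine ⟨Path.refl x₀, Path.refl x₀, ?_, fun t => hx₀U, fg_ext (by simp)⟩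
    have h1 : loopClass (Path.refl x₀) = (1 : FundamentalGroup X x₀) := fg_ext (by simp)
    rw [h1]; exact one_mem _

lemma fib_open_forward {x₀ : X} {H : Subgroup (FundamentalGroup X x₀)}
    {O : Set (Xtilde x₀ H)} (hO : IsOpen[lassoTop x₀ H] O) :
    ∀ p : Path x₀ x₀, Quot.mk (hrel H) ⟨x₀, p⟩ ∈ O →
      ∃ 𝒰 : Set (Set X), IsOpenCover 𝒰 ∧ ∀ γ : Path x₀ x₀,
        loopClass γ ∈ spanierGroupAt x₀ 𝒰 → Quot.mk (hrel H) ⟨x₀, p.trans γ⟩ ∈ O := by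
  have hO' : TopologicalSpace.GenerateOpen
      {S | ∃ (y : X) (α : Path x₀ y) (𝒰 : Set (Set X)) (U : Set X),
        IsOpenCover 𝒰 ∧ U ∈ 𝒰 ∧ y ∈ U ∧
        S = {q | ∃ (γ : Path y y) (z : X) (δ : Path y z),
              loopClass γ ∈ spanierGroupAt y 𝒰 ∧ (∀ t, δ t ∈ U) ∧
              q = Quot.mk _ ⟨z, (α.trans γ).trans δ⟩}} O := hO
  clear hO
  induction hO' with
  | @basic S hS =>
    intro p hp
    obtain ⟨y, α, 𝒰, U, hcov, hU, hyU, rfl⟩ := hS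
    obtain ⟨γ₀, z, δ₀, hγ₀, hδ₀, hq⟩ := hp
    rw [quot_eq_iff] at hq
    obtain ⟨h, m⟩ := hq
    dsimp only at h
    subst h
    rw [path_cast_self] at m
    refine ⟨𝒰, hcov, ?_⟩
    intro γ hγ
    refine ⟨γ₀.trans ((δ₀.trans γ).trans δ₀.symm), x₀, δ₀, ?_, hδ₀, ?_⟩
    · have h1 : loopClass (γ₀.trans ((δ₀.trans γ).trans δ₀.symm)) =
          cjf δ₀ (loopClass γ) * loopClass γ₀ := fg_ext (by simp)
      rw [h1]; exact mul_mem (cjf_spanier δ₀ hγ) hγ₀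
    · rw [quot_eq_iff, hrel_iff]
      have h1 : loopClass ((p.trans γ).trans
            (((α.trans (γ₀.trans ((δ₀.trans γ).trans δ₀.symm))).trans δ₀).symm)) =
          loopClass (p.trans (((α.trans γ₀).trans δ₀).symm)) := fg_ext (by simp)
      rw [h1]; exact m
  | univ => exact fun p _ => ⟨{Set.univ}, univ_cover, fun γ _ => trivial⟩
  | inter O₁ O₂ h₁ h₂ ih₁ ih₂ =>
    intro p hp
    obtain ⟨𝒰₁, hc₁, hp₁⟩ := ih₁ p hp.1
    obtain ⟨𝒰₂, hc₂, hp₂⟩ := ih₂ p hp.2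
    obtain ⟨𝒰, hc, hle₁, hle₂⟩ := cover_inter hc₁ hc₂
    exact ⟨𝒰, hc, fun γ hγ => ⟨hp₁ γ (hle₁ x₀ hγ), hp₂ γ (hle₂ x₀ hγ)⟩⟩
  | sUnion S hS ih =>
    intro p hp
    obtain ⟨O, hO, hpO⟩ := hp
    obtain ⟨𝒰, hc, hprop⟩ := ih O hO p hpO
    exact ⟨𝒰, hc, fun γ hγ => ⟨O, hO, hprop γ hγ⟩⟩

lemma fib_open_reverse {x₀ : X} {H : Subgroup (FundamentalGroup X x₀)}
    {T : Set {q : Xtilde x₀ H // endpointMap x₀ H q = x₀}}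
    (h : ∀ p : Path x₀ x₀, φ x₀ H p ∈ T → ∃ 𝒰 : Set (Set X), IsOpenCover 𝒰 ∧
      ∀ γ : Path x₀ x₀, loopClass γ ∈ spanierGroupAt x₀ 𝒰 → φ x₀ H (p.trans γ) ∈ T) :
    IsOpen[TopologicalSpace.induced Subtype.val (lassoTop x₀ H)] T := by
  letI := lassoTop x₀ H
  rw [isOpen_induced_iff]
  classical
  refine ⟨⋃₀ {S | TopologicalSpace.GenerateOpen
      {S' | ∃ (y : X) (α : Path x₀ y) (𝒰 : Set (Set X)) (U : Set X),
        IsOpenCover 𝒰 ∧ U ∈ 𝒰 ∧ y ∈ U ∧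
        S' = {q | ∃ (γ : Path y y) (z : X) (δ : Path y z),
              loopClass γ ∈ spanierGroupAt y 𝒰 ∧ (∀ t, δ t ∈ U) ∧
              q = Quot.mk _ ⟨z, (α.trans γ).trans δ⟩}} S ∧ Subtype.val ⁻¹' S ⊆ T}, ?_, ?_⟩
  · exact TopologicalSpace.GenerateOpen.sUnion _ (fun S hS => hS.1)
  · apply Set.eq_of_subset_of_subset
    · rintro q ⟨S, hS, hqS⟩
      exact hS.2 hqS
    · intro q hq
      obtain ⟨p, rfl⟩ := fib_surj x₀ H q
      obtain ⟨𝒰, hcov, hp⟩ := h p hq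
      obtain ⟨U, hU, hx₀U⟩ := mem_cover hcov x₀
      refine ⟨{q | ∃ (γ : Path x₀ x₀) (z : X) (δ : Path x₀ z),
          loopClass γ ∈ spanierGroupAt x₀ 𝒰 ∧ (∀ t, δ t ∈ U) ∧
          q = Quot.mk _ ⟨z, (p.trans γ).trans δ⟩}, ⟨?_, ?_⟩, ?_⟩
      · exact TopologicalSpace.GenerateOpen.basic _ ⟨x₀, p, 𝒰, U, hcov, hU, hx₀U, rfl⟩
      · rintro ⟨q', hq'end⟩ ⟨γ, z, δ, hγ, hδ, hq'⟩
        simp only [Set.mem_preimage] at hq' ⊢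
        have hz : x₀ = z := by
          have h2 := hq'end
          rw [show q' = Quot.mk (hrel H) ⟨z, (p.trans γ).trans δ⟩ from hq'] at h2
          exact h2.symm
        subst hz
        have he : (⟨q', hq'end⟩ : {q : Xtilde x₀ H // endpointMap x₀ H q = x₀}) =
            φ x₀ H (p.trans (γ.trans δ)) := by
          apply Subtype.ext
          show q' = _
          rw [show q' = Quot.mk (hrel H) ⟨x₀, (p.trans γ).trans δ⟩ from hq']
          show Quot.mk (hrel H) ⟨x₀, (p.trans γ).trans δ⟩ = Quot.mk (hrel H) ⟨x₀, p.trans (γ.trans δ)⟩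
          rw [quot_eq_iff, hrel_iff]
          have h1 : loopClass (((p.trans γ).trans δ).trans ((p.trans (γ.trans δ)).symm)) =
              (1 : FundamentalGroup X x₀) := fg_ext (by simp)
          rw [h1]; exact one_mem H
        rw [he]
        apply hp
        have h2 : loopClass (γ.trans δ) = loopClass δ * loopClass γ := fg_ext (by simp)
        rw [h2]
        exact mul_mem (loop_mem_spanier hU δ hδ) hγ
      · refine ⟨Path.refl x₀, x₀, Path.refl x₀, ?_, fun t => hx₀U, ?_⟩
        · have h1 : loopClass (Path.refl x₀) = (1 : FundamentalGroup X x₀) := fg_ext (by simp)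
          rw [h1]; exact one_mem _
        · show Quot.mk (hrel H) ⟨x₀, p⟩ = _
          rw [quot_eq_iff, hrel_iff]
          have h1 : loopClass (p.trans (((p.trans (Path.refl x₀)).trans (Path.refl x₀)).symm)) =
              (1 : FundamentalGroup X x₀) := fg_ext (by simp)
          rw [h1]; exact one_mem H

lemma pi1_closed_iff {x₀ : X} {s : Set (FundamentalGroup X x₀)} :
    IsClosed[lassoPi1 x₀] s ↔ IsOpen[lassoPi1 x₀] sᶜ := by
  letI := lassoPi1 x₀; exact isOpen_compl_iff.symm

end Char
end LassoAux
theorem lasso_fiber_t2_iff_closed [PathConnectedSpace X]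
    (x₀ : X) (H : Subgroup (FundamentalGroup X x₀)) (hN : H.Normal) :
    @T2Space {q : Xtilde x₀ H // endpointMap x₀ H q = x₀}
        (TopologicalSpace.induced Subtype.val (lassoTop x₀ H)) ↔
      IsClosed[lassoPi1 x₀] (H : Set (FundamentalGroup X x₀)) := by
  open LassoAux in
  constructor
  · intro hT2
    rw [pi1_closed_iff]
    apply pi1_open_reverse
    intro g hg
    obtain ⟨p, rfl⟩ := loopClass_surj g
    have hne : φ x₀ H p ≠ φ x₀ H (Path.refl x₀) := by
      intro he
      rw [φ_eq_iff] at he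
      have h1 : loopClass (p.trans (Path.refl x₀).symm) = loopClass p := fg_ext (by simp)
      rw [h1] at he
      exact hg he
    obtain ⟨V₁, V₂, hV₁, hV₂, hm₁, hm₂, hdisj⟩ :=
      @t2_separation _ (TopologicalSpace.induced Subtype.val (lassoTop x₀ H)) hT2 _ _ hne
    obtain ⟨O₁, hO₁, hpre₁⟩ := (@isOpen_induced_iff _ _ (lassoTop x₀ H) _ _).mp hV₁
    have hin₁ : Quot.mk (hrel H) ⟨x₀, p⟩ ∈ O₁ := by
      have := hm₁; rw [← hpre₁] at this; exact this
    obtain ⟨𝒰, hcov, hp⟩ := fib_open_forward hO₁ p hin₁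
    refine ⟨𝒰, hcov, ?_⟩
    intro c hc hcg
    obtain ⟨γc, rfl⟩ := loopClass_surj c
    have hmem₁ : φ x₀ H (p.trans γc) ∈ V₁ := by
      rw [← hpre₁]
      exact hp γc hc
    have heq : φ x₀ H (p.trans γc) = φ x₀ H (Path.refl x₀) := by
      rw [φ_eq_iff]
      have h1 : loopClass ((p.trans γc).trans (Path.refl x₀).symm) =
          loopClass γc * loopClass p := fg_ext (by simp)
      rw [h1]; exact hcg
    exact Set.disjoint_left.mp hdisj hmem₁ (heq ▸ hm₂)
  · intro hcl
    have hopen : IsOpen[lassoPi1 x₀] ((H : Set (FundamentalGroup X x₀))ᶜ) := by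
      rw [pi1_closed_iff] at hcl
      exact hcl
    refine @T2Space.mk _ (TopologicalSpace.induced Subtype.val (lassoTop x₀ H)) ?_
    intro q₁ q₂ hne
    obtain ⟨p₁, rfl⟩ := fib_surj x₀ H q₁
    obtain ⟨p₂, rfl⟩ := fib_surj x₀ H q₂
    have hd : loopClass (p₁.trans p₂.symm) ∉ H := by
      intro hmem
      exact hne ((φ_eq_iff x₀ H p₁ p₂).mpr hmem)
    obtain ⟨𝒰, hcov, hp⟩ := pi1_open_forward hopen _ hd
    refine ⟨{q | ∃ γ : Path x₀ x₀, loopClass γ ∈ spanierGroupAt x₀ 𝒰 ∧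
        q = φ x₀ H (p₁.trans γ)},
      {q | ∃ γ : Path x₀ x₀, loopClass γ ∈ spanierGroupAt x₀ 𝒰 ∧
        q = φ x₀ H (p₂.trans γ)}, ?_, ?_, ?_, ?_, ?_⟩
    · apply fib_open_reverse
      rintro p hpV
      obtain ⟨γ, hγ, he⟩ := hpV
      refine ⟨𝒰, hcov, ?_⟩
      intro γ' hγ'
      refine ⟨γ.trans γ', ?_, ?_⟩
      · have h1 : loopClass (γ.trans γ') = loopClass γ' * loopClass γ := fg_ext (by simp)
        rw [h1]; exact mul_mem hγ' hγ
      · rw [φ_eq_iff] at he ⊢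
        have h1 : loopClass ((p.trans γ').trans ((p₁.trans (γ.trans γ')).symm)) =
            loopClass (p.trans ((p₁.trans γ).symm)) := fg_ext (by simp)
        rw [h1]; exact he
    · apply fib_open_reverse
      rintro p hpV
      obtain ⟨γ, hγ, he⟩ := hpV
      refine ⟨𝒰, hcov, ?_⟩
      intro γ' hγ'
      refine ⟨γ.trans γ', ?_, ?_⟩
      · have h1 : loopClass (γ.trans γ') = loopClass γ' * loopClass γ := fg_ext (by simp)
        rw [h1]; exact mul_mem hγ' hγ
      · rw [φ_eq_iff] at he ⊢
        have h1 : loopClass ((p.trans γ').trans ((p₂.trans (γ.trans γ')).symm)) =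
            loopClass (p.trans ((p₂.trans γ).symm)) := fg_ext (by simp)
        rw [h1]; exact he
    · refine ⟨Path.refl x₀, ?_, ?_⟩
      · have h1 : loopClass (Path.refl x₀) = (1 : FundamentalGroup X x₀) := fg_ext (by simp)
        rw [h1]; exact one_mem _
      · rw [φ_eq_iff]
        have h1 : loopClass (p₁.trans ((p₁.trans (Path.refl x₀)).symm)) =
            (1 : FundamentalGroup X x₀) := fg_ext (by simp)
        rw [h1]; exact one_mem H
    · refine ⟨Path.refl x₀, ?_, ?_⟩
      · have h1 : loopClass (Path.refl x₀) = (1 : FundamentalGroup X x₀) := fg_ext (by simp)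
        rw [h1]; exact one_mem _
      · rw [φ_eq_iff]
        have h1 : loopClass (p₂.trans ((p₂.trans (Path.refl x₀)).symm)) =
            (1 : FundamentalGroup X x₀) := fg_ext (by simp)
        rw [h1]; exact one_mem H
    · rw [Set.disjoint_left]
      rintro q ⟨γ, hγ, rfl⟩ ⟨γ', hγ', he⟩
      rw [φ_eq_iff] at he
      have h1 : loopClass ((p₁.trans γ).trans ((p₂.trans γ').symm)) =
          (loopClass p₂)⁻¹ * (loopClass γ')⁻¹ * loopClass γ * loopClass p₁ :=
        fg_ext (by simp)
      rw [h1] at he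
      have hc'' : (loopClass p₂)⁻¹ * ((loopClass γ')⁻¹ * loopClass γ) * loopClass p₂ ∈
          spanierGroupAt x₀ 𝒰 := by
        have := (spanier_normal x₀ 𝒰).conj_mem _ (mul_mem (inv_mem hγ') hγ) (loopClass p₂)⁻¹
        rwa [inv_inv] at this
      have h2 : loopClass (p₁.trans p₂.symm) = (loopClass p₂)⁻¹ * loopClass p₁ :=
        fg_ext (by simp)
      refine hp _ hc'' ?_
      rw [h2]
      have h3 : (loopClass p₂)⁻¹ * ((loopClass γ')⁻¹ * loopClass γ) * loopClass p₂ *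
          ((loopClass p₂)⁻¹ * loopClass p₁) =
          (loopClass p₂)⁻¹ * (loopClass γ')⁻¹ * loopClass γ * loopClass p₁ := by group
      rw [h3]; exact he

end
end
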